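/- arXiv:math/9812131 — 9 statements merged into one kernel-verified Lean document; each statement's English description precedes it below -/
import Mathlib

section
/- There exist real numbers m₁, m₂ such that the rational function f(z) = (z − m₁)(z − m₂)(m₁·z + 1)(m₂·z + 1)/z² on ℂ \ {0} satisfies: (1) f(−1/conj(z)) = conj(f(z)) for all z ≠ 0; (2) f(z) ≠ 0 whenever |z| = 1; (3) the contour integral of f(z)/z over the positively oriented unit circle equals 0 (equivalently, the residue of f(z)/z·dz at 0 vanishes). -/
open ComplexConjugate

private lemma circleIntegrable_const_mul' {f : ℂ → ℂ} {c : ℂ} {R : ℝ} (a : ℂ)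
    (hf : CircleIntegrable f c R) : CircleIntegrable (fun z => a * f z) c R :=
  hf.const_mul a

private lemma circleIntegral_add' {f g : ℂ → ℂ} {c : ℂ} {R : ℝ}
    (hf : CircleIntegrable f c R) (hg : CircleIntegrable g c R) :
    (∮ z in C(c, R), (f z + g z)) = (∮ z in C(c, R), f z) + ∮ z in C(c, R), g z := by
  simp only [circleIntegral, smul_add, intervalIntegral.integral_add hf.out hg.out]

private lemma circleIntegral_zpow_const_mul' {c : ℂ} (n : ℤ) (hn : n ≠ -1) :
    (∮ z in C(0, 1), c * (z - 0) ^ n) = 0 := by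
  rw [circleIntegral.integral_const_mul, circleIntegral.integral_sub_zpow_of_ne hn, mul_zero]

private lemma key_decomp (a b z : ℂ) (hz : z ≠ 0) (h : (a + b) ^ 2 = (a * b) ^ 2 + 1) :
    (z - a) * (z - b) * (a * z + 1) * (b * z + 1) / z ^ 2 / z =
      (a * b) * (z - 0) ^ (1:ℤ) + ((a + b) * (1 - a * b) * (z - 0) ^ (0:ℤ) +
        ((a + b) * (a * b - 1) * (z - 0) ^ (-2:ℤ) + (a * b) * (z - 0) ^ (-3:ℤ))) := by
  simp only [sub_zero, zpow_one, zpow_zero, zpow_neg, zpow_ofNat]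
  field_simp
  linear_combination (-(z^2)) * h

/-- Lemma 2 of the paper: there exist real numbers `m₁, m₂` such that
`f(z) = (z − m₁)(z − m₂)(m₁z + 1)(m₂z + 1)/z²` satisfies `f(−1/conj z) = conj (f z)` for
`z ≠ 0`, has no zeros on the unit circle, and `∮ f(z)/z dz = 0` over the unit circle. -/
theorem stmt_1 :
    ∃ m₁ m₂ : ℝ, ∃ f : ℂ → ℂ,
      (∀ z : ℂ, f z =
        (z - (m₁ : ℂ)) * (z - (m₂ : ℂ)) * ((m₁ : ℂ) * z + 1) * ((m₂ : ℂ) * z + 1) / z ^ 2) ∧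
      (∀ z : ℂ, z ≠ 0 → f (-1 / conj z) = conj (f z)) ∧
      (∀ z : ℂ, ‖z‖ = 1 → f z ≠ 0) ∧
      (∮ z in C(0, 1), f z / z) = 0 := by
  have h13 : (3:ℝ) < Real.sqrt 13 := by
    nlinarith [Real.sq_sqrt (by norm_num : (13:ℝ) ≥ 0), Real.sqrt_nonneg 13]
  set m₁ : ℝ := 2 with hm₁
  set m₂ : ℝ := (2 + Real.sqrt 13) / 3 with hm₂
  have hm₂1 : 1 < m₂ := by rw [hm₂]; nlinarith
  have hm₂0 : 0 < m₂ := by linarith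
  have hkey : ((m₁:ℂ) + m₂) ^ 2 = ((m₁:ℂ) * m₂) ^ 2 + 1 := by
    have hr : (m₁ + m₂ : ℝ) ^ 2 = (m₁ * m₂ : ℝ) ^ 2 + 1 := by
      have h2 : Real.sqrt 13 ^ 2 = 13 := Real.sq_sqrt (by norm_num)
      rw [hm₁, hm₂]; nlinarith [h2]
    exact_mod_cast hr
  refine ⟨m₁, m₂, fun z =>
    (z - (m₁ : ℂ)) * (z - (m₂ : ℂ)) * ((m₁ : ℂ) * z + 1) * ((m₂ : ℂ) * z + 1) / z ^ 2,
    fun z => rfl, ?_, ?_, ?_⟩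
  · -- functional equation
    intro z hz
    have hc : (conj z : ℂ) ≠ 0 := by simpa using hz
    simp only [map_div₀, map_mul, map_sub, map_add, map_pow, map_one, Complex.conj_ofReal]
    field_simp
    ring
  · -- no zeros on the unit circle
    intro z hz hf
    have hz0 : z ≠ 0 := by intro h; rw [h] at hz; simp at hz
    rw [div_eq_zero_iff] at hf
    rcases hf with hf | hf
    · rcases mul_eq_zero.1 hf with hf | hf
      · rcases mul_eq_zero.1 hf with hf | hf
        · rcases mul_eq_zero.1 hf with hf | hf
          · rw [sub_eq_zero] at hf
            rw [hf, Complex.norm_real, Real.norm_eq_abs, hm₁] at hz; norm_num at hz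
          · rw [sub_eq_zero] at hf
            rw [hf, Complex.norm_real, Real.norm_eq_abs, abs_of_pos hm₂0] at hz
            exact absurd hz (by linarith)
        · have habs : ‖(m₁:ℂ) * z‖ = 1 := by
            rw [show ((m₁:ℂ) * z) = -1 by linear_combination hf]; simp
          rw [norm_mul, Complex.norm_real, Real.norm_eq_abs, hz, mul_one, hm₁] at habs
          norm_num at habs
      · have habs : ‖(m₂:ℂ) * z‖ = 1 := by
          rw [show ((m₂:ℂ) * z) = -1 by linear_combination hf]; simp
        rw [norm_mul, Complex.norm_real, Real.norm_eq_abs, hz, mul_one, abs_of_pos hm₂0] at habs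
        linarith
    · exact hz0 (pow_eq_zero_iff (by norm_num) |>.1 hf)
  · -- the integral vanishes
    set s : ℂ := (m₁:ℂ) + m₂ with hs
    set p : ℂ := (m₁:ℂ) * m₂ with hp
    have hcongr : (∮ z in C(0, 1),
        (z - (m₁ : ℂ)) * (z - (m₂ : ℂ)) * ((m₁ : ℂ) * z + 1) * ((m₂ : ℂ) * z + 1) / z ^ 2 / z)
        = ∮ z in C(0, 1), (p * (z - 0) ^ (1:ℤ) + ((s * (1 - p)) * (z - 0) ^ (0:ℤ) +
            ((s * (p - 1)) * (z - 0) ^ (-2:ℤ) + p * (z - 0) ^ (-3:ℤ)))) := by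
      refine circleIntegral.integral_congr (by norm_num) fun z hz => ?_
      have hz0 : z ≠ 0 := by
        intro h; rw [h] at hz; simp [Metric.mem_sphere] at hz
      exact key_decomp (m₁:ℂ) (m₂:ℂ) z hz0 hkey
    rw [hcongr]
    have h0 : (0:ℂ) ∉ Metric.sphere (0:ℂ) |1| := by norm_num
    have Izpow : ∀ n : ℤ, CircleIntegrable (fun z : ℂ => (z - 0) ^ n) 0 1 :=
      fun n => circleIntegrable_sub_zpow_iff.2 (Or.inr (Or.inr h0))
    have I1 : CircleIntegrable (fun z : ℂ => p * (z - 0) ^ (1:ℤ)) 0 1 :=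
      circleIntegrable_const_mul' _ (Izpow 1)
    have I2 : CircleIntegrable (fun z : ℂ => (s * (1 - p)) * (z - 0) ^ (0:ℤ)) 0 1 :=
      circleIntegrable_const_mul' _ (Izpow 0)
    have I3 : CircleIntegrable (fun z : ℂ => (s * (p - 1)) * (z - 0) ^ (-2:ℤ)) 0 1 :=
      circleIntegrable_const_mul' _ (Izpow (-2))
    have I4 : CircleIntegrable (fun z : ℂ => p * (z - 0) ^ (-3:ℤ)) 0 1 :=
      circleIntegrable_const_mul' _ (Izpow (-3))
    have I34 : CircleIntegrable (fun z : ℂ =>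
        (s * (p - 1)) * (z - 0) ^ (-2:ℤ) + p * (z - 0) ^ (-3:ℤ)) 0 1 := I3.add I4
    have I234 : CircleIntegrable (fun z : ℂ => (s * (1 - p)) * (z - 0) ^ (0:ℤ) +
        ((s * (p - 1)) * (z - 0) ^ (-2:ℤ) + p * (z - 0) ^ (-3:ℤ))) 0 1 := I2.add I34
    rw [circleIntegral_add' I1 I234, circleIntegral_add' I2 I34, circleIntegral_add' I3 I4,
      circleIntegral_zpow_const_mul' 1 (by decide),
      circleIntegral_zpow_const_mul' 0 (by decide),
      circleIntegral_zpow_const_mul' (-2) (by decide),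
      circleIntegral_zpow_const_mul' (-3) (by decide)]
    ring
end

section
/- Let m₁ = 2 and m₂ = (2 + √13)/3, and let f(z) = (z − m₁)(z − m₂)(m₁·z + 1)(m₂·z + 1)/z² for z ∈ ℂ \ {0}. Then the contour integral of f(z)/z over the positively oriented unit circle equals 0. -/
/-- For `m₁ = 2` and `m₂ = (2 + √13)/3`, the contour integral of `f(z)/z` over the positively
oriented unit circle vanishes, where `f(z) = (z − m₁)(z − m₂)(m₁z + 1)(m₂z + 1)/z²`. -/
theorem stmt_6 (m₁ m₂ : ℝ) (hm₁ : m₁ = 2) (hm₂ : m₂ = (2 + Real.sqrt 13) / 3)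
    (f : ℂ → ℂ)
    (hf : ∀ z : ℂ, f z =
      (z - (m₁ : ℂ)) * (z - (m₂ : ℂ)) * ((m₁ : ℂ) * z + 1) * ((m₂ : ℂ) * z + 1) / z ^ 2) :
    (∮ z in C(0, 1), f z / z) = 0 := by
  -- key algebraic relation: 3 m₂² = 4 m₂ + 3
  have hsq : (3 * m₂ - 2) ^ 2 = 13 := by
    have h13 : Real.sqrt 13 ^ 2 = 13 := Real.sq_sqrt (by norm_num)
    rw [hm₂]; nlinarith [h13]
  have key : 3 * (m₂ : ℂ) ^ 2 = 4 * (m₂ : ℂ) + 3 := by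
    have h : 3 * m₂ ^ 2 = 4 * m₂ + 3 := by nlinarith [hsq]
    exact_mod_cast congrArg (Complex.ofReal) h
  set a : ℂ := 2 + (m₂ : ℂ) with ha
  set b : ℂ := 2 * (m₂ : ℂ) with hb
  -- `f z / z` has the antiderivative below on the unit circle, so its integral vanishes
  refine circleIntegral.integral_eq_zero_of_hasDerivWithinAt (f := fun x =>
    b / 2 * x ^ 2 + a * (1 - b) * id x + a * (1 - b) * x⁻¹ - b / 2 * (x ^ 2)⁻¹)
    (by norm_num) fun z hz => ?_
  have hz0 : z ≠ 0 := by
    intro h; rw [h] at hz; simp at hz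
  have h2 := (hasDerivAt_pow 2 z).const_mul (b / 2)
  have h1 := (hasDerivAt_id z).const_mul (a * (1 - b))
  have hm1 := (hasDerivAt_inv hz0).const_mul (a * (1 - b))
  have hm2 := ((hasDerivAt_pow 2 z).inv (pow_ne_zero 2 hz0)).const_mul (b / 2)
  have hD := ((h2.add h1).add hm1).sub hm2
  have hEq : f z / z = b / 2 * (↑2 * z ^ (2 - 1)) + a * (1 - b) * 1 +
      a * (1 - b) * (-(z ^ 2)⁻¹) - b / 2 * (-(↑2 * z ^ (2 - 1)) / (z ^ 2) ^ 2) := by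
    rw [hf, hm₁]
    simp only [ha, hb]
    push_cast
    field_simp
    linear_combination (z ^ 2) * key
  rw [hEq]
  exact hD.hasDerivWithinAt
end

section
/- Let α, β ∈ ℂ \ {0} with α ∉ {β, −1/conj(β)}, and define h(z) = i/((z − α)(z − β)(conj(α)·z + 1)(conj(β)·z + 1)). Then for every z ∈ ℂ \ {0, α, β, −1/conj(α), −1/conj(β)}, one has h(−1/conj(z))·(1/conj(z)²) = −conj(h(z)·z²). -/
open ComplexConjugate

theorem aux8 (I A B C D c : ℂ) (hA : A ≠ 0) (hB : B ≠ 0) (hC : C ≠ 0) (hD : D ≠ 0)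
    (hc : c ≠ 0) :
    I / (-C / c * (-D / c) * (A / c) * (B / c)) * (1 / c ^ 2) =
      -(-I / (A * B * C * D) * c ^ 2) := by
  field_simp

/-- Transformation law `Î*(η̂) = −conj(η̂ ĝ²)` for `η̂ = h(z)dz`, `ĝ(z) = z`, under
`Î(z) = −1/conj z`, where `h(z) = i/((z−α)(z−β)(conj α·z+1)(conj β·z+1))`. -/
theorem stmt_8 (α β : ℂ) (hα : α ≠ 0) (hβ : β ≠ 0) (hαβ : α ≠ β) (hαβ' : α ≠ -1 / conj β)
    (h : ℂ → ℂ)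
    (hh : ∀ z : ℂ, h z =
      Complex.I / ((z - α) * (z - β) * (conj α * z + 1) * (conj β * z + 1)))
    (z : ℂ) (hz : z ∉ ({0, α, β, -1 / conj α, -1 / conj β} : Set ℂ)) :
    h (-1 / conj z) * (1 / conj z ^ 2) = -conj (h z * z ^ 2) := by
  simp only [Set.mem_insert_iff, Set.mem_singleton_iff, not_or] at hz
  obtain ⟨hz0, hzα, hzβ, hzα', hzβ'⟩ := hz
  have hcα : conj α ≠ 0 := by simpa using hα
  have hcβ : conj β ≠ 0 := by simpa using hβ
  have hcz : conj z ≠ 0 := by simpa using hz0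
  have h1 : z - α ≠ 0 := sub_ne_zero.mpr hzα
  have h2 : z - β ≠ 0 := sub_ne_zero.mpr hzβ
  have h3 : conj α * z + 1 ≠ 0 := fun hc =>
    hzα' (by rw [eq_div_iff hcα]; linear_combination hc)
  have h4 : conj β * z + 1 ≠ 0 := fun hc =>
    hzβ' (by rw [eq_div_iff hcβ]; linear_combination hc)
  have h1' : conj (z - α) ≠ 0 := (map_ne_zero _).mpr h1
  have h2' : conj (z - β) ≠ 0 := (map_ne_zero _).mpr h2
  have h3' : conj (conj α * z + 1) ≠ 0 := (map_ne_zero _).mpr h3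
  have h4' : conj (conj β * z + 1) ≠ 0 := (map_ne_zero _).mpr h4
  rw [hh, hh]
  have e1 : -1 / conj z - α = -(conj (conj α * z + 1)) / conj z := by
    field_simp; simp only [map_add, map_mul, map_sub, map_one, Complex.conj_conj]; ring
  have e2 : -1 / conj z - β = -(conj (conj β * z + 1)) / conj z := by
    field_simp; simp only [map_add, map_mul, map_sub, map_one, Complex.conj_conj]; ring
  have e3 : conj α * (-1 / conj z) + 1 = conj (z - α) / conj z := by
    field_simp; simp only [map_add, map_mul, map_sub, map_one, Complex.conj_conj]; ring
  have e4 : conj β * (-1 / conj z) + 1 = conj (z - β) / conj z := by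
    field_simp; simp only [map_add, map_mul, map_sub, map_one, Complex.conj_conj]; ring
  rw [e1, e2, e3, e4]
  simp only [map_mul, map_div₀, map_pow, Complex.conj_I]
  exact aux8 _ _ _ _ _ _ h1' h2' h3' h4' hcz
end

section
/- Let α, β ∈ ℂ \ {0} with α ∉ {β, −1/conj(β)}, let h(z) = i/((z − α)(z − β)(conj(α)·z + 1)(conj(β)·z + 1)), and define φ₁(z) = (1/2)·(1 − z²)·h(z), φ₂(z) = (i/2)·(1 + z²)·h(z), φ₃(z) = z·h(z). Then for every z ∈ ℂ \ {0, α, β, −1/conj(α), −1/conj(β)} and each j = 1, 2, 3, one has φⱼ(−1/conj(z))·(1/conj(z)²) = conj(φⱼ(z)). -/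
open ComplexConjugate

/-- The Weierstrass forms `Φ̂ⱼ = φⱼ(z)dz` built from `ĝ(z) = z`, `η̂ = h(z)dz` satisfy
`Î*(Φ̂ⱼ) = conj Φ̂ⱼ` for the antiholomorphic involution `Î(z) = −1/conj z`. -/
theorem stmt_9 (α β : ℂ) (hα : α ≠ 0) (hβ : β ≠ 0) (hαβ : α ≠ β) (hαβ' : α ≠ -1 / conj β)
    (h φ₁ φ₂ φ₃ : ℂ → ℂ)
    (hh : ∀ z : ℂ, h z =
      Complex.I / ((z - α) * (z - β) * (conj α * z + 1) * (conj β * z + 1)))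
    (hφ₁ : ∀ z : ℂ, φ₁ z = (1 / 2) * (1 - z ^ 2) * h z)
    (hφ₂ : ∀ z : ℂ, φ₂ z = (Complex.I / 2) * (1 + z ^ 2) * h z)
    (hφ₃ : ∀ z : ℂ, φ₃ z = z * h z)
    (z : ℂ) (hz : z ∉ ({0, α, β, -1 / conj α, -1 / conj β} : Set ℂ)) :
    φ₁ (-1 / conj z) * (1 / conj z ^ 2) = conj (φ₁ z) ∧
    φ₂ (-1 / conj z) * (1 / conj z ^ 2) = conj (φ₂ z) ∧
    φ₃ (-1 / conj z) * (1 / conj z ^ 2) = conj (φ₃ z) := by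
  simp only [Set.mem_insert_iff, Set.mem_singleton_iff, not_or] at hz
  obtain ⟨hz0, hzα, hzβ, hzα', hzβ'⟩ := hz
  set w := conj z with hw
  have hw0 : w ≠ 0 := by simpa [hw] using hz0
  have h1 : w - conj α ≠ 0 := by
    intro hc
    exact hzα (by simpa [hw] using congrArg conj (sub_eq_zero.mp hc))
  have h2 : w - conj β ≠ 0 := by
    intro hc
    exact hzβ (by simpa [hw] using congrArg conj (sub_eq_zero.mp hc))
  have hca : conj α ≠ 0 := by simpa using hα
  have hcb : conj β ≠ 0 := by simpa using hβ
  have h3 : α * w + 1 ≠ 0 := by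
    intro hc
    apply hzα'
    have hwv : w = -1 / α := by
      field_simp
      linear_combination hc
    have hzc : z = conj w := by simp [hw]
    rw [hzc, hwv]
    simp [map_div₀]
  have h4 : β * w + 1 ≠ 0 := by
    intro hc
    apply hzβ'
    have hwv : w = -1 / β := by
      field_simp
      linear_combination hc
    have hzc : z = conj w := by simp [hw]
    rw [hzc, hwv]
    simp [map_div₀]
  have h3' : 1 + α * w ≠ 0 := by intro hc; exact h3 (by linear_combination hc)
  have h4' : 1 + β * w ≠ 0 := by intro hc; exact h4 (by linear_combination hc)
  -- nonvanishing of the factors at -1/w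
  have k1 : -1 / w - α ≠ 0 := by
    intro hc
    apply h3
    have := sub_eq_zero.mp hc
    field_simp at this
    linear_combination -this
  have k2 : -1 / w - β ≠ 0 := by
    intro hc
    apply h4
    have := sub_eq_zero.mp hc
    field_simp at this
    linear_combination -this
  have k3 : conj α * (-1 / w) + 1 ≠ 0 := by
    intro hc
    apply h1
    field_simp at hc
    linear_combination hc
  have k4 : conj β * (-1 / w) + 1 ≠ 0 := by
    intro hc
    apply h2
    field_simp at hc
    linear_combination hc
  have d1 : (-1 / w - α) * (-1 / w - β) * (conj α * (-1 / w) + 1) *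
      (conj β * (-1 / w) + 1) ≠ 0 :=
    mul_ne_zero (mul_ne_zero (mul_ne_zero k1 k2) k3) k4
  have d2 : (1 + α * w) * (1 + β * w) * (w - conj α) * (w - conj β) ≠ 0 :=
    mul_ne_zero (mul_ne_zero (mul_ne_zero h3' h4') h1) h2
  have key : h (-1 / w) =
      Complex.I * w ^ 4 /
        ((1 + α * w) * (1 + β * w) * (w - conj α) * (w - conj β)) := by
    rw [hh, div_eq_div_iff d1 d2]
    field_simp
    ring
  have hconjh : conj (h z) =
      -Complex.I / ((w - conj α) * (w - conj β) * (α * w + 1) * (β * w + 1)) := by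
    rw [hh]
    simp only [map_div₀, map_mul, map_sub, map_add, map_one, Complex.conj_conj, Complex.conj_I,
      ← hw]
  have hzw : conj z = w := hw.symm
  have e1 : (1 : ℂ) - (-1 / w) ^ 2 = (w ^ 2 - 1) / w ^ 2 := by
    field_simp
  have e2 : (1 : ℂ) + (-1 / w) ^ 2 = (w ^ 2 + 1) / w ^ 2 := by
    field_simp
  refine ⟨?_, ?_, ?_⟩
  · rw [hφ₁ ((-1 : ℂ) / w), hφ₁ z, key]
    simp only [map_mul, map_sub, map_one, map_pow, map_div₀, hzw, Complex.conj_conj,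
      Complex.conj_ofNat]
    rw [hconjh, e1]
    simp only [div_mul_div_comm, div_mul_eq_mul_div, mul_div_assoc', mul_one, one_mul, div_div]
    rw [div_eq_div_iff
      (mul_ne_zero (mul_ne_zero (mul_ne_zero two_ne_zero (pow_ne_zero 2 hw0)) d2) (pow_ne_zero 2 hw0))
      (mul_ne_zero two_ne_zero (mul_ne_zero (mul_ne_zero (mul_ne_zero h1 h2) h3) h4))]
    ring
  · rw [hφ₂ ((-1 : ℂ) / w), hφ₂ z, key]
    simp only [map_mul, map_add, map_one, map_pow, map_div₀, hzw, Complex.conj_conj,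
      Complex.conj_I, Complex.conj_ofNat]
    rw [hconjh, e2]
    simp only [div_mul_div_comm, div_mul_eq_mul_div, mul_div_assoc', mul_one, one_mul, div_div]
    rw [div_eq_div_iff
      (mul_ne_zero (mul_ne_zero (mul_ne_zero two_ne_zero (pow_ne_zero 2 hw0)) d2) (pow_ne_zero 2 hw0))
      (mul_ne_zero two_ne_zero (mul_ne_zero (mul_ne_zero (mul_ne_zero h1 h2) h3) h4))]
    ring
  · rw [hφ₃ ((-1 : ℂ) / w), hφ₃ z, key]
    simp only [map_mul, hzw]
    rw [hconjh]
    rw [div_mul_div_comm, div_mul_div_comm, mul_div_assoc', div_eq_div_iff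
      (mul_ne_zero (mul_ne_zero hw0 d2) (pow_ne_zero 2 hw0))
      (mul_ne_zero (mul_ne_zero (mul_ne_zero h1 h2) h3) h4)]
    ring
end

section
/- Let α, β ∈ ℂ \ {0} with α ∉ {β, −1/conj(β)}, let S = {α, β, −1/conj(α), −1/conj(β)}, and let h(z) = i/((z − α)(z − β)(conj(α)·z + 1)(conj(β)·z + 1)). Then for every p ∈ S and every C¹ path γ : [0,1) → ℂ \ S with γ(t) → p as t → 1, the length of γ with respect to the conformal metric (1/2)·(1 + |z|²)·|h(z)|·|dz| is infinite: ∫₀¹ (1/2)·(1 + |γ(t)|²)·|h(γ(t))|·|γ'(t)| dt = ∞. -/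
open ComplexConjugate Set MeasureTheory

lemma fact_aux (α β : ℂ) (hα : α ≠ 0) (hβ : β ≠ 0) (hαβ : α ≠ β) (hαβ' : α ≠ -1 / conj β)
    (p : ℂ) (hp : p ∈ ({α, β, -1 / conj α, -1 / conj β} : Set ℂ)) :
    ∃ P : ℂ → ℂ, Continuous P ∧ P p ≠ 0 ∧
      ∀ z, (z - α) * (z - β) * (conj α * z + 1) * (conj β * z + 1) = (z - p) * P z := by
  have hA : conj α ≠ 0 := by simpa using hα
  have hB : conj β ≠ 0 := by simpa using hβ
  have k1 : conj α * α + 1 ≠ 0 := by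
    rw [Complex.conj_mul']
    intro hc
    have h2 : ((‖α‖ ^ 2 + 1 : ℝ) : ℂ) = 0 := by push_cast; linear_combination hc
    rw [Complex.ofReal_eq_zero] at h2
    nlinarith [norm_nonneg α]
  have k4 : conj β * β + 1 ≠ 0 := by
    rw [Complex.conj_mul']
    intro hc
    have h2 : ((‖β‖ ^ 2 + 1 : ℝ) : ℂ) = 0 := by push_cast; linear_combination hc
    rw [Complex.ofReal_eq_zero] at h2
    nlinarith [norm_nonneg β]
  have k2 : conj β * α + 1 ≠ 0 := by
    intro hc
    apply hαβ'
    field_simp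
    linear_combination hc
  have k3 : conj α * β + 1 ≠ 0 := by
    intro hc
    apply hαβ'
    have := congrArg (conj) hc
    simp at this
    field_simp
    linear_combination this
  rcases hp with h | h | h | h
  · refine ⟨fun z => (z - β) * (conj α * z + 1) * (conj β * z + 1), by continuity, ?_,
      fun z => by rw [h]; ring⟩
    rw [h]
    exact mul_ne_zero (mul_ne_zero (sub_ne_zero.mpr hαβ) k1) k2
  · refine ⟨fun z => (z - α) * (conj α * z + 1) * (conj β * z + 1), by continuity, ?_,
      fun z => by rw [h]; ring⟩
    rw [h]
    exact mul_ne_zero (mul_ne_zero (sub_ne_zero.mpr fun hc => hαβ hc.symm) k3) k4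
  · refine ⟨fun z => conj α * ((z - α) * (z - β) * (conj β * z + 1)), by continuity, ?_,
      fun z => by rw [h]; field_simp; ring⟩
    rw [h]
    apply mul_ne_zero hA
    refine mul_ne_zero (mul_ne_zero ?_ ?_) ?_
    · intro hc; apply k1; rw [sub_eq_zero] at hc
      field_simp at hc
      linear_combination -hc
    · intro hc; apply k3; rw [sub_eq_zero] at hc
      field_simp at hc
      linear_combination -hc
    · intro hc; apply hαβ
      field_simp at hc
      have := congrArg (conj) hc
      simp at this
      linear_combination this
  · refine ⟨fun z => conj β * ((z - α) * (z - β) * (conj α * z + 1)), by continuity, ?_,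
      fun z => by rw [h]; field_simp; ring⟩
    rw [h]
    apply mul_ne_zero hB
    refine mul_ne_zero (mul_ne_zero ?_ ?_) ?_
    · intro hc; apply hαβ'; rw [sub_eq_zero] at hc; exact hc.symm
    · intro hc; apply k4; rw [sub_eq_zero] at hc
      field_simp at hc
      linear_combination -hc
    · intro hc; apply hαβ
      field_simp at hc
      have := congrArg (conj) hc
      simp at this
      linear_combination -this

set_option maxHeartbeats 1000000 in
/-- Completeness of the metric `(1/2)(1+|z|²)|h(z)||dz|` at the punctures: every C¹ path in
`ℂ \ S` converging to a point of `S = {α, β, −1/conj α, −1/conj β}` has infinite length. -/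
theorem stmt_10 (α β : ℂ) (hα : α ≠ 0) (hβ : β ≠ 0) (hαβ : α ≠ β) (hαβ' : α ≠ -1 / conj β)
    (S : Set ℂ) (hS : S = {α, β, -1 / conj α, -1 / conj β})
    (h : ℂ → ℂ)
    (hh : ∀ z : ℂ, h z =
      Complex.I / ((z - α) * (z - β) * (conj α * z + 1) * (conj β * z + 1)))
    (p : ℂ) (hp : p ∈ S)
    (γ dγ : ℝ → ℂ)
    (hγmem : ∀ t ∈ Ico (0 : ℝ) 1, γ t ∉ S)
    (hγderiv : ∀ t ∈ Ico (0 : ℝ) 1, HasDerivAt γ (dγ t) t)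
    (hdγcont : ContinuousOn dγ (Ico (0 : ℝ) 1))
    (hlim : Filter.Tendsto γ (nhdsWithin 1 (Iio (1 : ℝ))) (nhds p)) :
    ∫⁻ t in Ioo (0 : ℝ) 1,
      ENNReal.ofReal ((1 / 2) * (1 + ‖γ t‖ ^ 2) * ‖h (γ t)‖ *
        ‖dγ t‖) = ⊤ := by
  obtain ⟨P, hPc, hP0, hfac⟩ := fact_aux α β hα hβ hαβ hαβ' p (hS ▸ hp)
  have hPp : (0 : ℝ) < ‖P p‖ := norm_pos_iff.mpr hP0
  set C : ℝ := 2 * ‖P p‖ with hCdef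
  have hCpos : 0 < C := by positivity
  -- choose ε from continuity of P
  obtain ⟨ε, hε, hball⟩ : ∃ ε > 0, ∀ z : ℂ, dist z p < ε → dist (P z) (P p) < ‖P p‖ :=
    Metric.continuousAt_iff.mp hPc.continuousAt _ hPp
  have hPbound : ∀ z : ℂ, dist z p < ε → 0 < ‖P z‖ ∧ ‖P z‖ < C := by
    intro z hz
    have h1 := hball z hz
    rw [dist_eq_norm] at h1
    have h2 : ‖P p‖ - ‖P z‖ ≤ ‖P z - P p‖ := by
      have := norm_sub_norm_le (P z) (P p); linarith [abs_le.mp (abs_norm_sub_norm_le (P z) (P p))]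
    have h3 : ‖P z‖ - ‖P p‖ ≤ ‖P z - P p‖ := norm_sub_norm_le (P z) (P p)
    constructor
    · linarith
    · rw [hCdef]; linarith
  -- gamma avoids p
  have hγne : ∀ t ∈ Ico (0 : ℝ) 1, γ t ≠ p := fun t ht hc => hγmem t ht (hc ▸ hp)
  -- choose a
  have hU : {t : ℝ | dist (γ t) p < ε} ∈ nhdsWithin 1 (Iio (1 : ℝ)) :=
    Metric.tendsto_nhds.mp hlim ε hε
  obtain ⟨a₀, ha₀, hsub⟩ := mem_nhdsLT_iff_exists_Ioo_subset.mp hU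
  simp only [mem_Iio] at ha₀
  set a : ℝ := (max a₀ (1 / 2) + 1) / 2 with hadef
  have hmax1 : max a₀ (1 / 2) < 1 := max_lt ha₀ (by norm_num)
  have ha1 : a < 1 := by rw [hadef]; linarith
  have ha0 : 0 < a := by
    have := le_max_right a₀ (1 / 2); rw [hadef]; linarith
  have haa₀ : a₀ < a := by
    have := le_max_left a₀ (1 / 2); rw [hadef]; linarith
  have hmem : ∀ t : ℝ, a ≤ t → t < 1 → t ∈ Ico (0 : ℝ) 1 ∧ dist (γ t) p < ε := by
    intro t h1 h2
    exact ⟨⟨by linarith, h2⟩, hsub ⟨by linarith, h2⟩⟩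
  -- the squared distance function
  set n : ℝ → ℝ := fun t => ‖γ t - p‖ ^ 2 with hndef
  have hnpos : ∀ t ∈ Ico (0 : ℝ) 1, 0 < n t := by
    intro t ht
    exact pow_pos (norm_pos_iff.mpr (sub_ne_zero.mpr (hγne t ht))) 2
  -- derivative of n
  have hn : ∀ t ∈ Ico (0 : ℝ) 1, HasDerivAt n (2 * (inner ℝ (γ t - p) (dγ t) : ℝ)) t := by
    intro t ht
    have hf : HasDerivAt (fun s => γ s - p) (dγ t) t := (hγderiv t ht).sub_const p
    have hi := hf.inner ℝ hf
    have heq : (fun s => (inner ℝ (γ s - p) (γ s - p) : ℝ)) = n := by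
      funext s; rw [real_inner_self_eq_norm_sq]
    rw [heq] at hi
    rw [real_inner_comm (γ t - p) (dγ t)] at hi
    rw [two_mul]; exact hi
  -- the main claim: ofReal M ≤ I for all M
  set I := ∫⁻ t in Ioo (0 : ℝ) 1,
      ENNReal.ofReal ((1 / 2) * (1 + ‖γ t‖ ^ 2) * ‖h (γ t)‖ *
        ‖dγ t‖) with hIdef
  have key : ∀ M : ℝ, ENNReal.ofReal M ≤ I := by
    intro M
    set c : ℝ := 1 / (2 * C) with hcdef
    have hcpos : 0 < c := by positivity
    set δ : ℝ := Real.exp (Real.log (n a) - 2 * M / c) with hδdef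
    -- tendsto of n to 0
    have htendn : Filter.Tendsto n (nhdsWithin 1 (Iio (1 : ℝ))) (nhds 0) := by
      have h1 : Filter.Tendsto (fun t => γ t - p) (nhdsWithin 1 (Iio (1 : ℝ))) (nhds 0) := by
        simpa using hlim.sub_const p
      have h2 := (h1.norm).pow 2
      simpa using h2
    have hev : ∀ᶠ t in nhdsWithin 1 (Iio (1 : ℝ)), n t < δ :=
      htendn.eventually_lt_const (Real.exp_pos _)
    have hev2 : ∀ᶠ t in nhdsWithin 1 (Iio (1 : ℝ)), t ∈ Ioo a 1 :=
      Filter.eventually_of_mem (Ioo_mem_nhdsLT_of_mem ⟨ha1, le_refl 1⟩) (fun x hx => hx)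
    obtain ⟨b, hbδ, hbmem⟩ := (hev.and hev2).exists
    obtain ⟨hab, hb1⟩ := hbmem
    have hIcc : Icc a b ⊆ Ico (0 : ℝ) 1 := fun t ht => (hmem t ht.1 (lt_of_le_of_lt ht.2 hb1)).1
    have hIccε : ∀ t ∈ Icc a b, dist (γ t) p < ε := fun t ht =>
      (hmem t ht.1 (lt_of_le_of_lt ht.2 hb1)).2
    -- continuity facts on Icc a b
    have hγcont : ContinuousOn γ (Icc a b) := fun t ht =>
      ((hγderiv t (hIcc ht)).continuousAt).continuousWithinAt
    have hdγc : ContinuousOn dγ (Icc a b) := hdγcont.mono hIcc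
    have hfc : ContinuousOn (fun t => γ t - p) (Icc a b) := hγcont.sub continuousOn_const
    have hnc : ContinuousOn n (Icc a b) := (hfc.norm).pow 2
    have hnne : ∀ t ∈ Icc a b, n t ≠ 0 := fun t ht => (hnpos t (hIcc ht)).ne'
    -- φ = derivative of log ∘ n
    set φ : ℝ → ℝ := fun t => 2 * (inner ℝ (γ t - p) (dγ t) : ℝ) / n t with hφdef
    have hφc : ContinuousOn φ (Icc a b) :=
      ((continuousOn_const.mul (hfc.inner hdγc)).div hnc hnne)
    set ψ : ℝ → ℝ := fun t => ‖dγ t‖ / ‖γ t - p‖ with hψdef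
    have hψc : ContinuousOn ψ (Icc a b) := by
      apply (hdγc.norm).div (hfc.norm)
      intro t ht
      exact norm_ne_zero_iff.mpr (sub_ne_zero.mpr (hγne t (hIcc ht)))
    have hable : a ≤ b := le_of_lt hab
    have huIcc : uIcc a b = Icc a b := uIcc_of_le hable
    -- FTC
    have hftc : ∫ t in a..b, φ t = Real.log (n b) - Real.log (n a) := by
      apply intervalIntegral.integral_eq_sub_of_hasDerivAt
      · intro t ht
        rw [huIcc] at ht
        exact (hn t (hIcc ht)).log (hnne t ht)
      · rw [intervalIntegrable_iff_integrableOn_Icc_of_le hable]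
        exact hφc.integrableOn_Icc
    -- pointwise bound -φ ≤ 2 ψ
    have hpt : ∀ t ∈ Icc a b, -φ t ≤ 2 * ψ t := by
      intro t ht
      have hr : 0 < ‖γ t - p‖ := norm_pos_iff.mpr (sub_ne_zero.mpr (hγne t (hIcc ht)))
      have hi : |(inner ℝ (γ t - p) (dγ t) : ℝ)| ≤ ‖γ t - p‖ * ‖dγ t‖ :=
        abs_real_inner_le_norm _ _
      have hi2 : -(inner ℝ (γ t - p) (dγ t) : ℝ) ≤ ‖γ t - p‖ * ‖dγ t‖ := by
        have := (abs_le.mp hi).1; linarith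
      have hnt : n t = ‖γ t - p‖ ^ 2 := rfl
      show -(2 * (inner ℝ (γ t - p) (dγ t) : ℝ) / n t) ≤ 2 * (‖dγ t‖ / ‖γ t - p‖)
      rw [neg_div', div_le_iff₀ (by rw [hnt]; positivity)]
      have hr'' : ‖γ t - p‖ ≠ 0 := by exact hr.ne'
      have e : 2 * (‖dγ t‖ / ‖γ t - p‖) * n t = 2 * ‖dγ t‖ * ‖γ t - p‖ := by
        rw [hnt]; field_simp [hr'']
      rw [e]
      nlinarith
    -- interval integrability
    have hφint : IntervalIntegrable φ volume a b := (huIcc ▸ hφc).intervalIntegrable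
    have hψint : IntervalIntegrable (fun t => 2 * ψ t) volume a b :=
      (huIcc ▸ (continuousOn_const.mul hψc)).intervalIntegrable
    have hmono : ∫ t in a..b, -φ t ≤ ∫ t in a..b, 2 * ψ t :=
      intervalIntegral.integral_mono_on hable hφint.neg hψint hpt
    rw [intervalIntegral.integral_neg, hftc] at hmono
    -- log bound
    have hnb : 0 < n b := hnpos b ⟨by linarith, hb1⟩
    have hlogb : Real.log (n b) ≤ Real.log (n a) - 2 * M / c := by
      have := Real.log_le_log hnb hbδ.le
      rwa [hδdef, Real.log_exp] at this
    have hψge : 2 * M / c ≤ ∫ t in a..b, 2 * ψ t := by linarith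
    -- pointwise lower bound of the integrand
    have hFb : ∀ t ∈ Ioc a b, c * ψ t ≤
        1 / 2 * (1 + ‖γ t‖ ^ 2) * ‖h (γ t)‖ * ‖dγ t‖ := by
      intro t ht
      have ht' : t ∈ Icc a b := Ioc_subset_Icc_self ht
      have htI : t ∈ Ico (0:ℝ) 1 := hIcc ht'
      have hεt : dist (γ t) p < ε := hIccε t ht'
      obtain ⟨hq0, hqC⟩ := hPbound (γ t) hεt
      have hr : (0:ℝ) < ‖γ t - p‖ := by
        exact norm_pos_iff.mpr (sub_ne_zero.mpr (hγne t htI))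
      have habs : ‖h (γ t)‖ =
          1 / (‖γ t - p‖ * ‖P (γ t)‖) := by
        rw [hh, hfac (γ t), norm_div, norm_mul, Complex.norm_I]
      have hψt : ψ t = ‖dγ t‖ / ‖γ t - p‖ := by
        rfl
      have hd0 : (0:ℝ) ≤ ‖dγ t‖ := norm_nonneg _
      have hA0 : (0:ℝ) ≤ ‖γ t‖ ^ 2 := by positivity
      rw [habs, hψt]
      have step1 : c * (‖dγ t‖ / ‖γ t - p‖) =
          1 / 2 * (1 / (‖γ t - p‖ * C)) * ‖dγ t‖ := by
        rw [hcdef]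
        field_simp
      rw [step1]
      have step2 : 1 / (‖γ t - p‖ * C) ≤
          1 / (‖γ t - p‖ * ‖P (γ t)‖) := by
        apply one_div_le_one_div_of_le (by positivity)
        nlinarith
      have hx0 : (0:ℝ) ≤ 1 / (‖γ t - p‖ * ‖P (γ t)‖) := by positivity
      calc 1 / 2 * (1 / (‖γ t - p‖ * C)) * ‖dγ t‖
          ≤ 1 / 2 * (1 / (‖γ t - p‖ * ‖P (γ t)‖)) * ‖dγ t‖ := by
            apply mul_le_mul_of_nonneg_right _ hd0
            apply mul_le_mul_of_nonneg_left step2 (by norm_num)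
        _ ≤ 1 / 2 * (1 + ‖γ t‖ ^ 2) *
              (1 / (‖γ t - p‖ * ‖P (γ t)‖)) * ‖dγ t‖ := by
            nlinarith [mul_nonneg (mul_nonneg hA0 hx0) hd0]
    -- the lintegral chain
    have hsub2 : Ioc a b ⊆ Ioo (0:ℝ) 1 := fun t ht =>
      ⟨lt_trans ha0 ht.1, lt_of_le_of_lt ht.2 hb1⟩
    have hint : IntegrableOn (fun t => c * ψ t) (Ioc a b) volume :=
      ((continuousOn_const.mul hψc).integrableOn_Icc).mono_set Ioc_subset_Icc_self
    have hMle : M ≤ ∫ t in Ioc a b, c * ψ t := by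
      rw [← intervalIntegral.integral_of_le hable, intervalIntegral.integral_const_mul]
      have h2ψ : ∫ t in a..b, 2 * ψ t = 2 * ∫ t in a..b, ψ t := by
        rw [intervalIntegral.integral_const_mul]
      rw [h2ψ] at hψge
      have h2' : 2 * (M / c) ≤ 2 * ∫ t in a..b, ψ t := by
        rw [mul_div_assoc] at hψge; exact hψge
      have : M / c ≤ ∫ t in a..b, ψ t := by linarith
      calc M = c * (M / c) := by field_simp
        _ ≤ c * ∫ t in a..b, ψ t := by
            apply mul_le_mul_of_nonneg_left this hcpos.le
    calc ENNReal.ofReal M ≤ ENNReal.ofReal (∫ t in Ioc a b, c * ψ t) :=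
          ENNReal.ofReal_le_ofReal hMle
      _ = ∫⁻ t in Ioc a b, ENNReal.ofReal (c * ψ t) := by
          apply ofReal_integral_eq_lintegral_ofReal hint
          apply Filter.Eventually.of_forall
          intro t
          have : (0:ℝ) ≤ ψ t := by rw [hψdef]; positivity
          positivity
      _ ≤ ∫⁻ t in Ioc a b, ENNReal.ofReal
            (1 / 2 * (1 + ‖γ t‖ ^ 2) * ‖h (γ t)‖ * ‖dγ t‖) := by
          apply lintegral_mono_ae
          rw [ae_restrict_iff' measurableSet_Ioc]
          exact Filter.Eventually.of_forall fun t ht => ENNReal.ofReal_le_ofReal (hFb t ht)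
      _ ≤ I := by rw [hIdef]; exact lintegral_mono_set hsub2
  -- conclude
  by_contra htop
  have h1 : ENNReal.ofReal (I.toReal + 1) ≤ I := key _
  have h3 := ENNReal.toReal_mono htop h1
  rw [ENNReal.toReal_ofReal (by positivity)] at h3
  linarith
end

section
/- Let F map the punctured open unit disc 𝔻* = {z ∈ ℂ : 0 < |z| < 1} into itself, suppose the map z ↦ F(conj(z)) is holomorphic on 𝔻*, and suppose F(F(z)) = z for all z ∈ 𝔻*. Then there exists θ ∈ ℝ such that F(z) = e^{iθ}·conj(z) for all z ∈ 𝔻*; in particular F has a fixed point in 𝔻*. -/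
open ComplexConjugate Set Asymptotics Metric

lemma conjconj_hasDerivAt {f : ℂ → ℂ} {d z : ℂ} (hf : HasDerivAt f d (conj z)) :
    HasDerivAt (fun w => conj (f (conj w))) (conj d) z := by
  rw [hasDerivAt_iff_isLittleO] at hf ⊢
  have hc : Filter.Tendsto (fun w : ℂ => conj w) (nhds z) (nhds (conj z)) :=
    (Complex.continuous_conj.tendsto z)
  have h := hf.comp_tendsto hc
  rw [isLittleO_iff] at h ⊢
  intro ε hε
  filter_upwards [h hε] with w hw
  simp only [smul_eq_mul, Function.comp] at hw ⊢
  have e1 : (starRingEnd ℂ) (f ((starRingEnd ℂ) w)) - (starRingEnd ℂ) (f ((starRingEnd ℂ) z)) -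
        (w - z) * (starRingEnd ℂ) d
      = conj (f (conj w) - f (conj z) - (conj w - conj z) * d) := by
    simp only [map_sub, map_mul, Complex.conj_conj]
  have e2 : ‖w - z‖ = ‖(starRingEnd ℂ) w - (starRingEnd ℂ) z‖ := by
    rw [← map_sub, RCLike.norm_conj]
  rw [e1, RCLike.norm_conj, e2]
  exact hw

lemma punctured_nebot : (nhdsWithin (0:ℂ) (ball 0 1 \ {0})).NeBot := by
  have h1 : ball (0:ℂ) 1 ∈ nhdsWithin (0:ℂ) {(0:ℂ)}ᶜ :=
    mem_nhdsWithin_of_mem_nhds (ball_mem_nhds _ one_pos)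
  have h2 : nhdsWithin (0:ℂ) (ball 0 1 \ {0}) = nhdsWithin (0:ℂ) {(0:ℂ)}ᶜ := by
    rw [diff_eq, nhdsWithin_inter_of_mem h1]
  rw [h2]
  exact Module.punctured_nhds_neBot ℂ ℂ 0

/-- Extension lemma: a holomorphic self-map `G` of the punctured disc with a
holomorphic left inverse `H` extends holomorphically over `0` with value `0`. -/
lemma ext_lemma {G H : ℂ → ℂ}
    (hGd : DifferentiableOn ℂ G (ball 0 1 \ {0}))
    (hGm : MapsTo G (ball 0 1 \ {0}) (ball 0 1 \ {0}))
    (hHd : DifferentiableOn ℂ H (ball 0 1 \ {0}))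
    (hHm : MapsTo H (ball 0 1 \ {0}) (ball 0 1 \ {0}))
    (hHG : ∀ z ∈ ball (0:ℂ) 1 \ {0}, H (G z) = z) :
    ∃ g : ℂ → ℂ, DifferentiableOn ℂ g (ball 0 1) ∧ g 0 = 0 ∧
      (∀ z ∈ ball (0:ℂ) 1 \ {0}, g z = G z) ∧ MapsTo g (ball 0 1) (ball 0 1) := by
  set S : Set ℂ := ball 0 1 \ {0} with hS
  have hSopen : IsOpen S := isOpen_ball.sdiff isClosed_singleton
  set g : ℂ → ℂ := Function.update G 0 (Filter.limUnder (nhdsWithin (0:ℂ) {(0:ℂ)}ᶜ) G) with hg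
  have hb : BddAbove (norm ∘ G '' S) := by
    refine ⟨1, fun x hx => ?_⟩
    obtain ⟨z, hz, rfl⟩ := hx
    have := hGm hz
    simpa [Complex.dist_eq] using (mem_ball.1 this.1).le
  have hgd : DifferentiableOn ℂ g (ball 0 1) := by
    have : (ball (0:ℂ) 1) ∈ nhds (0:ℂ) := ball_mem_nhds _ one_pos
    exact Complex.differentiableOn_update_limUnder_of_bddAbove this hGd hb
  have hg_eq : ∀ z ∈ S, g z = G z := by
    intro z hz
    exact Function.update_of_ne hz.2 _ _
  have hcont0 : ContinuousAt g 0 :=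
    (hgd.differentiableAt (isOpen_ball.mem_nhds (mem_ball_self one_pos))).continuousAt
  haveI : (nhdsWithin (0:ℂ) S).NeBot := punctured_nebot
  have hGt : Filter.Tendsto G (nhdsWithin (0:ℂ) S) (nhds (g 0)) := by
    refine ((hcont0.tendsto.mono_left nhdsWithin_le_nhds).congr' ?_)
    filter_upwards [eventually_mem_nhdsWithin] with z hz
    exact (hg_eq z hz)
  have hg0 : g 0 = 0 := by
    by_contra hne
    have hle : ‖g 0‖ ≤ 1 := by
      refine le_of_tendsto (hGt.norm) ?_
      filter_upwards [eventually_mem_nhdsWithin] with z hz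
      simpa [Complex.dist_eq] using (mem_ball.1 (hGm hz).1).le
    rcases lt_or_eq_of_le hle with hlt | heq1
    · -- 0 < ‖g 0‖ < 1, so g 0 ∈ S; contradiction via H
      have haS : g 0 ∈ S := by
        constructor
        · simpa [Complex.dist_eq] using hlt
        · simpa using hne
      have hHc : ContinuousAt H (g 0) :=
        (hHd.differentiableAt (hSopen.mem_nhds haS)).continuousAt
      have h1 : Filter.Tendsto (fun z => H (G z)) (nhdsWithin (0:ℂ) S) (nhds (H (g 0))) :=
        hHc.tendsto.comp hGt
      have hid : Filter.Tendsto (fun z : ℂ => z) (nhdsWithin (0:ℂ) S) (nhds 0) :=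
        Filter.tendsto_id.mono_left nhdsWithin_le_nhds
      have h2 : Filter.Tendsto (fun z => H (G z)) (nhdsWithin (0:ℂ) S) (nhds 0) := by
        refine hid.congr' ?_
        filter_upwards [eventually_mem_nhdsWithin] with z hz
        exact (hHG z hz).symm
      have : H (g 0) = 0 := tendsto_nhds_unique h1 h2
      exact (hHm haS).2 (by simpa using this)
    · -- ‖g 0‖ = 1 : maximum principle gives contradiction
      have hmax : IsMaxOn (norm ∘ g) (ball 0 1) 0 := by
        intro z hz
        simp only [mem_setOf_eq, Function.comp_apply]
        rcases eq_or_ne z 0 with rfl | hz0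
        · exact le_rfl
        · have hzS : z ∈ S := ⟨hz, hz0⟩
          have h3 : ‖G z‖ < 1 := by
            simpa [Complex.dist_eq] using (mem_ball.1 (hGm hzS).1)
          rw [hg_eq z hzS, heq1]
          exact h3.le
      have hEq := Complex.eqOn_of_isPreconnected_of_isMaxOn_norm
        (convex_ball (0:ℂ) 1).isPreconnected isOpen_ball hgd (mem_ball_self one_pos) hmax
      have h12 : (1/2 : ℂ) ∈ S := by
        constructor
        · simp [Complex.dist_eq]; norm_num
        · norm_num
      have : ‖G (1/2 : ℂ)‖ < 1 := by
        simpa [Complex.dist_eq] using (mem_ball.1 (hGm h12).1)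
      rw [← hg_eq _ h12, hEq h12.1, ← heq1] at this
      exact lt_irrefl _ this
  have hgm : MapsTo g (ball 0 1) (ball 0 1) := by
    intro z hz
    rcases eq_or_ne z 0 with rfl | hz0
    · rw [hg0]; exact mem_ball_self one_pos
    · rw [hg_eq z ⟨hz, hz0⟩]; exact (hGm ⟨hz, hz0⟩).1
  exact ⟨g, hgd, hg0, hg_eq, hgm⟩

/-- Every antiholomorphic involution `F` of the punctured unit disc `𝔻*` is of the form
`F(z) = e^{iθ} conj z`; in particular `F` has a fixed point in `𝔻*`. -/
theorem stmt_11 (F : ℂ → ℂ)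
    (hmaps : MapsTo F {z : ℂ | 0 < ‖z‖ ∧ ‖z‖ < 1}
      {z : ℂ | 0 < ‖z‖ ∧ ‖z‖ < 1})
    (hanti : DifferentiableOn ℂ (fun z => F (conj z))
      {z : ℂ | 0 < ‖z‖ ∧ ‖z‖ < 1})
    (hinv : ∀ z ∈ {z : ℂ | 0 < ‖z‖ ∧ ‖z‖ < 1}, F (F z) = z) :
    (∃ θ : ℝ, ∀ z ∈ {z : ℂ | 0 < ‖z‖ ∧ ‖z‖ < 1},
      F z = Complex.exp (θ * Complex.I) * conj z) ∧
    ∃ z ∈ {z : ℂ | 0 < ‖z‖ ∧ ‖z‖ < 1}, F z = z := by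
  have hSet : {z : ℂ | 0 < ‖z‖ ∧ ‖z‖ < 1} = ball (0:ℂ) 1 \ {0} := by
    ext z
    simp only [mem_setOf_eq, mem_diff, mem_ball, Complex.dist_eq, sub_zero, mem_singleton_iff]
    constructor
    · rintro ⟨h1, h2⟩; exact ⟨h2, fun h => by simp [h] at h1⟩
    · rintro ⟨h1, h2⟩; exact ⟨by simpa [norm_pos_iff] using h2, h1⟩
  set S : Set ℂ := ball (0:ℂ) 1 \ {0} with hS
  rw [hSet] at hmaps hanti hinv
  have hSopen : IsOpen S := isOpen_ball.sdiff isClosed_singleton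
  have hconjS : ∀ z : ℂ, z ∈ S ↔ conj z ∈ S := by
    intro z
    simp only [hS, mem_diff, mem_ball, Complex.dist_eq, sub_zero, mem_singleton_iff,
      map_eq_zero, Complex.norm_conj]
  set G : ℂ → ℂ := fun z => F (conj z) with hGdef
  set H : ℂ → ℂ := fun z => conj (F z) with hHdef
  have hGd : DifferentiableOn ℂ G S := hanti
  have hGm : MapsTo G S S := fun z hz => hmaps ((hconjS z).1 hz)
  have hHm : MapsTo H S S := fun z hz => (hconjS _).1 (hmaps hz)
  have hHeq : ∀ z, H z = conj (G (conj z)) := by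
    intro z; simp only [hGdef, hHdef, Complex.conj_conj]
  have hHd : DifferentiableOn ℂ H S := by
    intro z hz
    have hz' : conj z ∈ S := (hconjS z).1 hz
    have h1 : DifferentiableAt ℂ G (conj z) := hGd.differentiableAt (hSopen.mem_nhds hz')
    have h2 := conjconj_hasDerivAt h1.hasDerivAt
    have h3 : DifferentiableAt ℂ (fun w => conj (G (conj w))) z := h2.differentiableAt
    exact (h3.congr_of_eventuallyEq (Filter.Eventually.of_forall fun w =>
      (hHeq w))).differentiableWithinAt
  have hHG : ∀ z ∈ S, H (G z) = z := by
    intro z hz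
    have : F (F (conj z)) = conj z := hinv _ ((hconjS z).1 hz)
    simp only [hGdef, hHdef, this, Complex.conj_conj]
  have hGH : ∀ z ∈ S, G (H z) = z := by
    intro z hz
    simp only [hGdef, hHdef, Complex.conj_conj]
    exact hinv z hz
  obtain ⟨g, hgd, hg0, hg_eq, hgm⟩ := ext_lemma hGd hGm hHd hHm hHG
  obtain ⟨h, hhd, hh0, hh_eq, hhm⟩ := ext_lemma hHd hHm hGd hGm hGH
  -- |g z| = |z| on the ball
  have habs : ∀ z ∈ ball (0:ℂ) 1, ‖g z‖ = ‖z‖ := by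
    intro z hz
    have h1 : ‖g z‖ ≤ ‖z‖ :=
      Complex.norm_le_norm_of_mapsTo_ball hgd (hgm.mono_right ball_subset_closedBall) hg0
        (by simpa [Complex.dist_eq] using (mem_ball.1 hz))
    rcases eq_or_ne z 0 with rfl | hz0
    · simp [hg0]
    · have hzS : z ∈ S := ⟨hz, hz0⟩
      have hgzS : g z ∈ S := by rw [hg_eq z hzS]; exact hGm hzS
      have h2 : ‖h (g z)‖ ≤ ‖g z‖ :=
        Complex.norm_le_norm_of_mapsTo_ball hhd (hhm.mono_right ball_subset_closedBall) hh0
          (by simpa [Complex.dist_eq] using (mem_ball.1 hgzS.1))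
      rw [hh_eq _ hgzS, hg_eq z hzS, hHG z hzS, ← hg_eq z hzS] at h2
      exact le_antisymm h1 h2
  -- Schwarz equality case: g z = c * z
  have hmem12 : (1/2 : ℂ) ∈ ball (0:ℂ) 1 := by
    simp [Complex.dist_eq]; norm_num
  set c : ℂ := dslope g 0 (1/2 : ℂ) with hc
  have hgmaps' : MapsTo g (ball 0 1) (ball (g 0) 1) := by rw [hg0]; exact hgm
  have hcnorm : ‖c‖ = 1 := by
    rw [hc, dslope_of_ne _ (by norm_num : (1/2:ℂ) ≠ 0), slope_def_field, hg0, sub_zero, sub_zero]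
    rw [norm_div]
    have h12 : ‖g (1/2 : ℂ)‖ = ‖(1/2 : ℂ)‖ := habs _ hmem12
    rw [h12]
    have : ‖(1/2 : ℂ)‖ ≠ 0 := by simp
    field_simp
  have haff := Complex.affine_of_mapsTo_ball_of_norm_dslope_eq_div hgd (hgmaps'.mono_right ball_subset_closedBall)
    hmem12 (by rw [← hc, hcnorm]; norm_num)
  have hgc : ∀ z ∈ ball (0:ℂ) 1, g z = c * z := by
    intro z hz
    have := haff hz
    simp only [hg0, sub_zero, smul_eq_mul, zero_add] at this
    rw [this, mul_comm]
  -- conclude the formula for F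
  have hFc : ∀ z ∈ S, F z = c * conj z := by
    intro z hz
    have hz' : conj z ∈ S := (hconjS z).1 hz
    have : G (conj z) = c * conj z := by
      rw [← hg_eq _ hz']; exact hgc _ hz'.1
    simpa only [hGdef, Complex.conj_conj] using this
  have hcabs : ‖c‖ = 1 := by exact hcnorm
  obtain ⟨θ, hθ⟩ : ∃ θ : ℝ, c = Complex.exp (θ * Complex.I) := by
    refine ⟨c.arg, ?_⟩
    conv_lhs => rw [← Complex.norm_mul_exp_arg_mul_I c]
    rw [hcabs, Complex.ofReal_one, one_mul]
  refine ⟨⟨θ, fun z hz => by rw [hFc z (hSet ▸ hz), ← hθ]⟩, ?_⟩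
  -- fixed point
  set w : ℂ := Complex.exp ((θ/2 : ℝ) * Complex.I) / 2 with hw
  have habsw : ‖w‖ = 1/2 := by
    rw [hw, norm_div, Complex.norm_exp_ofReal_mul_I]
    simp [Complex.norm_two]
  have hwS : w ∈ S := by
    constructor
    · rw [mem_ball, Complex.dist_eq, sub_zero, habsw]; norm_num
    · simp only [mem_singleton_iff]
      intro h0
      rw [h0] at habsw
      norm_num at habsw
  refine ⟨w, ?_, ?_⟩
  · rw [hSet]; exact hwS
  · rw [hFc w hwS, hθ, hw]
    rw [map_div₀, ← Complex.exp_conj, map_mul, Complex.conj_ofReal, Complex.conj_I]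
    have h2 : (starRingEnd ℂ) 2 = 2 := by
      rw [show ((2:ℂ)) = ((2:ℝ) : ℂ) by norm_num, Complex.conj_ofReal]
    rw [h2, ← mul_div_assoc, ← Complex.exp_add]
    congr 2
    push_cast
    ring
end

section
/- Let 𝔻 = {z ∈ ℂ : |z| < 1}, let F : 𝔻 → 𝔻 be such that z ↦ F(conj(z)) is holomorphic on 𝔻, and suppose F(F(z)) = z for all z ∈ 𝔻. Then F has a fixed point: there exists z ∈ 𝔻 with F(z) = z. -/
open ComplexConjugate Set

namespace Stmt12Aux

lemma denom_ne (a w : ℂ) (ha : ‖a‖ < 1) (hw : ‖w‖ < 1) :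
    1 - conj a * w ≠ 0 := by
  intro h
  have h1 : conj a * w = 1 := by linear_combination -h
  have : ‖conj a * w‖ = 1 := by rw [h1]; simp
  rw [norm_mul, Complex.norm_conj] at this
  nlinarith [norm_nonneg a, norm_nonneg w]

lemma normSq_key (a w : ℂ) :
    Complex.normSq (1 - conj a * w) - Complex.normSq (a - w)
      = (1 - Complex.normSq a) * (1 - Complex.normSq w) := by
  simp only [Complex.normSq_apply, Complex.sub_re, Complex.sub_im, Complex.mul_re,
    Complex.mul_im, Complex.one_re, Complex.one_im, Complex.conj_re, Complex.conj_im]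
  ring

lemma mobius_maps (a w : ℂ) (ha : ‖a‖ < 1) (hw : ‖w‖ < 1) :
    ‖(a - w) / (1 - conj a * w)‖ < 1 := by
  have hd := denom_ne a w ha hw
  have hdpos : 0 < ‖1 - conj a * w‖ := by
    simpa [norm_pos_iff] using hd
  rw [norm_div, div_lt_one hdpos]
  have hkey := normSq_key a w
  have h1 : Complex.normSq a < 1 := by
    rw [← Complex.sq_norm] ; nlinarith [norm_nonneg a]
  have h2 : Complex.normSq w < 1 := by
    rw [← Complex.sq_norm] ; nlinarith [norm_nonneg w]
  have hlt : Complex.normSq (a - w) < Complex.normSq (1 - conj a * w) := by nlinarith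
  rw [← Complex.sq_norm, ← Complex.sq_norm] at hlt
  exact lt_of_pow_lt_pow_left₀ 2 (norm_nonneg _) hlt

lemma mobius_invol (a w : ℂ) (ha : ‖a‖ < 1) (hw : ‖w‖ < 1) :
    (a - (a - w) / (1 - conj a * w)) / (1 - conj a * ((a - w) / (1 - conj a * w))) = w := by
  have h1 := denom_ne a w ha hw
  have h2 := denom_ne a _ ha (mobius_maps a w ha hw)
  have h3 : (1 : ℂ) - a * conj a ≠ 0 := by
    have h4 := denom_ne a a ha ha
    intro h; exact h4 (by linear_combination h)
  field_simp at h2 ⊢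
  ring_nf
  field_simp [h3]
  ring

end Stmt12Aux

open Stmt12Aux in
/-- Every antiholomorphic involution of the open unit disc has a fixed point. -/
theorem stmt_12 (F : ℂ → ℂ)
    (hmaps : MapsTo F {z : ℂ | ‖z‖ < 1} {z : ℂ | ‖z‖ < 1})
    (hanti : DifferentiableOn ℂ (fun z => F (conj z)) {z : ℂ | ‖z‖ < 1})
    (hinv : ∀ z ∈ {z : ℂ | ‖z‖ < 1}, F (F z) = z) :
    ∃ z ∈ {z : ℂ | ‖z‖ < 1}, F z = z := by
  by_cases h0 : F 0 = 0
  · exact ⟨0, by simp, h0⟩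
  have hset : {z : ℂ | ‖z‖ < 1} = Metric.ball (0 : ℂ) 1 := by
    ext z; simp [Complex.dist_eq]
  set G : ℂ → ℂ := fun z => F (conj z) with hGdef
  set a : ℂ := F 0 with ha_def
  have ha : ‖a‖ < 1 := hmaps (by simp)
  have ha0 : a ≠ 0 := h0
  have hca0 : conj a ≠ 0 := by simpa using ha0
  have hcamem : conj a ∈ Metric.ball (0:ℂ) 1 := by
    rw [Metric.mem_ball, Complex.dist_eq]; simpa using ha
  have hG0 : G 0 = a := by simp [hGdef, ha_def]
  have hGca : G (conj a) = 0 := by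
    show F (conj (conj a)) = 0
    rw [Complex.conj_conj]
    exact hinv 0 (by simp)
  have hGd : DifferentiableOn ℂ G (Metric.ball 0 1) := hset ▸ hanti
  have hGm : MapsTo G (Metric.ball 0 1) (Metric.ball 0 1) := by
    intro z hz
    rw [Metric.mem_ball, Complex.dist_eq] at hz ⊢
    simp only [sub_zero] at hz ⊢
    exact hmaps (by simpa using hz)
  set φ : ℂ → ℂ := fun w => (a - w) / (1 - conj a * w) with hφdef
  have hφm : ∀ w, ‖w‖ < 1 → ‖φ w‖ < 1 := fun w hw =>
    mobius_maps a w ha hw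
  have hφd : DifferentiableOn ℂ φ (Metric.ball 0 1) := by
    apply DifferentiableOn.div
    · exact (differentiableOn_const a).sub differentiableOn_id
    · exact (differentiableOn_const 1).sub ((differentiableOn_const _).mul differentiableOn_id)
    · intro w hw
      rw [Metric.mem_ball, Complex.dist_eq, sub_zero] at hw
      exact denom_ne a w ha hw
  set K : ℂ → ℂ := φ ∘ G with hKdef
  have habs : ∀ z : ℂ, z ∈ Metric.ball (0:ℂ) 1 ↔ ‖z‖ < 1 := by
    intro z; rw [Metric.mem_ball, Complex.dist_eq, sub_zero]
  have hKd : DifferentiableOn ℂ K (Metric.ball 0 1) := hφd.comp hGd hGm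
  have hKm : MapsTo K (Metric.ball 0 1) (Metric.ball 0 1) := by
    intro z hz
    rw [habs]
    exact hφm _ ((habs _).1 (hGm hz))
  have hK0 : K 0 = 0 := by
    simp only [hKdef, Function.comp_apply, hG0, hφdef]
    simp
  have hKca : K (conj a) = a := by
    simp only [hKdef, Function.comp_apply, hGca, hφdef]
    simp
  have hdsl : dslope K 0 (conj a) = (conj a)⁻¹ * a := by
    rw [dslope_of_ne _ hca0, slope_def_field, hKca, hK0]
    field_simp
    ring
  have hnorm : ‖dslope K 0 (conj a)‖ = 1 / 1 := by
    rw [hdsl]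
    simp only [norm_mul, norm_inv, Complex.norm_conj]
    field_simp [ha0]
  have hmapsK : MapsTo K (Metric.ball 0 1) (Metric.ball (K 0) 1) := by
    rw [hK0]; exact hKm
  have hEq := Complex.affine_of_mapsTo_ball_of_exists_norm_dslope_eq_div hKd (hmapsK.mono_right Metric.ball_subset_closedBall) hcamem hnorm
  -- K z = z * ((conj a)⁻¹ * a) on the ball
  have hKz : ∀ z ∈ Metric.ball (0:ℂ) 1, φ (G z) = z * ((conj a)⁻¹ * a) := by
    intro z hz
    have := hEq hz
    simp only [hK0, hdsl, smul_eq_mul, sub_zero, zero_add] at this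
    exact this
  -- set up the fixed point
  set r : ℝ := ‖a‖ with hr_def
  have hr0 : 0 < r := norm_pos_iff.mpr ha0
  have hr1 : r < 1 := ha
  set s : ℝ := Real.sqrt (1 - r ^ 2) with hs_def
  have hs2 : s ^ 2 = 1 - r ^ 2 := Real.sq_sqrt (by nlinarith)
  have hs0 : 0 < s := Real.sqrt_pos.2 (by nlinarith)
  have hs1 : s < 1 := by nlinarith
  have hsr : 1 - r < s := by nlinarith
  set t : ℝ := (1 - s) / r ^ 2 with ht_def
  have ht0 : 0 ≤ t := by
    apply div_nonneg (by linarith) (by positivity)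
  have htr2 : t * r ^ 2 = 1 - s := by
    rw [ht_def]; field_simp
  set z₀ : ℂ := (t : ℂ) * a with hz₀_def
  have hz₀abs : ‖z₀‖ < 1 := by
    rw [hz₀_def, norm_mul, Complex.norm_real, Real.norm_eq_abs, abs_of_nonneg ht0, ← hr_def]
    calc t * r = (1 - s) / r := by rw [ht_def]; field_simp
    _ < 1 := by rw [div_lt_one hr0]; linarith
  have hw : conj z₀ = (t : ℂ) * conj a := by
    rw [hz₀_def, map_mul, Complex.conj_ofReal]
  have hwmem : conj z₀ ∈ Metric.ball (0:ℂ) 1 := by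
    rw [habs]; simpa using hz₀abs
  -- compute F z₀ = G (conj z₀)
  have hFz : F z₀ = G (conj z₀) := by
    simp [hGdef, Complex.conj_conj]
  have hGw : φ (G (conj z₀)) = (t : ℂ) * a := by
    rw [hKz _ hwmem, hw]
    field_simp
  have hGwmem : ‖G (conj z₀)‖ < 1 := (habs _).1 (hGm hwmem)
  have hGval : G (conj z₀) = φ ((t : ℂ) * a) := by
    have := mobius_invol a (G (conj z₀)) ha hGwmem
    rw [show ((a - G (conj z₀)) / (1 - conj a * G (conj z₀))) = φ (G (conj z₀)) from rfl] at this
    rw [hGw] at this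
    exact this.symm
  refine ⟨z₀, by simpa using hz₀abs, ?_⟩
  rw [hFz, hGval, hφdef]
  -- now pure computation: (a - t a)/(1 - conj a * (t a)) = t a
  have hmc : conj a * a = ((r ^ 2 : ℝ) : ℂ) := by
    rw [mul_comm, Complex.mul_conj, Complex.normSq_eq_norm_sq]
  have hden : (1 : ℂ) - conj a * ((t:ℂ) * a) = ((s : ℝ) : ℂ) := by
    have : conj a * ((t:ℂ) * a) = ((t * r ^ 2 : ℝ) : ℂ) := by
      push_cast
      rw [show conj a * ((t:ℂ) * a) = (t:ℂ) * (conj a * a) by ring, hmc]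
      push_cast; ring
    rw [this, htr2]
    push_cast; ring
  have hsne : ((s:ℝ):ℂ) ≠ 0 := by exact_mod_cast hs0.ne'
  simp only []
  rw [hden, div_eq_iff hsne]
  -- goal : a - t a = t a * s
  have hreal : 1 - t = t * s := by
    rw [ht_def]; field_simp; nlinarith
  have hC : ((1 - t : ℝ) : ℂ) = ((t * s : ℝ) : ℂ) := by exact_mod_cast hreal
  push_cast at hC
  linear_combination a * hC
end

section
/- Let R > 1, let A(R) = {z ∈ ℂ : 1/R < |z| < R}, and let F : A(R) → A(R) be such that z ↦ F(conj(z)) is holomorphic on A(R), F(F(z)) = z for all z ∈ A(R), and F(z) ≠ z for all z ∈ A(R). Then F(z) = −1/conj(z) for all z ∈ A(R). -/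
open ComplexConjugate Set

noncomputable section AnnulusAux

/-- open annulus -/
def ann (a b : ℝ) : Set ℂ := {z : ℂ | a < ‖z‖ ∧ ‖z‖ < b}

lemma ann_isOpen (a b : ℝ) : IsOpen (ann a b) := by
  have : ann a b = (norm ⁻¹' Ioi a) ∩ (norm ⁻¹' Iio b) := rfl
  rw [this]
  exact (isOpen_Ioi.preimage continuous_norm).inter
    (isOpen_Iio.preimage continuous_norm)

lemma ann_isPreconnected (a b : ℝ) (ha : 0 ≤ a) : IsPreconnected (ann a b) := by
  have h : ann a b = (fun p : ℝ × ℝ => (p.1 : ℂ) * Complex.exp (p.2 * Complex.I)) ''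
      (Ioo a b ×ˢ (univ : Set ℝ)) := by
    ext z
    constructor
    · rintro ⟨h1, h2⟩
      exact ⟨(‖z‖, Complex.arg z), ⟨⟨h1, h2⟩, trivial⟩,
        Complex.norm_mul_exp_arg_mul_I z⟩
    · rintro ⟨⟨r, θ⟩, ⟨⟨hr1, hr2⟩, -⟩, rfl⟩
      have : ‖(r : ℂ) * Complex.exp (θ * Complex.I)‖ = r := by
        rw [norm_mul, Complex.norm_exp_ofReal_mul_I, mul_one, Complex.norm_real, Real.norm_eq_abs,
          abs_of_nonneg (le_trans ha hr1.le)]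
      exact ⟨by rw [this]; exact hr1, by rw [this]; exact hr2⟩
  rw [h]
  exact (isPreconnected_Ioo.prod isPreconnected_univ).image _ (by fun_prop)

lemma cann_isCompact (s : ℝ) : IsCompact {z : ℂ | s⁻¹ ≤ ‖z‖ ∧ ‖z‖ ≤ s} := by
  have hc : IsClosed {z : ℂ | s⁻¹ ≤ ‖z‖ ∧ ‖z‖ ≤ s} := by
    have : {z : ℂ | s⁻¹ ≤ ‖z‖ ∧ ‖z‖ ≤ s}
        = (norm ⁻¹' Ici s⁻¹) ∩ (norm ⁻¹' Iic s) := rfl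
    rw [this]
    exact (isClosed_Ici.preimage continuous_norm).inter
      (isClosed_Iic.preimage continuous_norm)
  apply Metric.isCompact_of_isClosed_isBounded hc
  apply Metric.isBounded_closedBall (x := (0:ℂ)) (r := s) |>.subset
  intro z hz
  simpa [Complex.dist_eq] using hz.2

/-- Collar dichotomy: near the boundary of the annulus, a continuous involution
pushes points near one of the two boundary circles. -/
lemma collar (R : ℝ) (hR : 1 < R) (F : ℂ → ℂ)
    (hmaps : MapsTo F (ann (1/R) R) (ann (1/R) R))
    (hcont : ContinuousOn F (ann (1/R) R))
    (hinv : ∀ z ∈ ann (1/R) R, F (F z) = z)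
    {s : ℝ} (hs1 : 1 < s) (hsR : s < R) :
    ∃ t, s ≤ t ∧ t < R ∧
    ((∀ z ∈ ann (1/R) R, t < ‖z‖ → s < ‖F z‖) ∨
     (∀ z ∈ ann (1/R) R, t < ‖z‖ → ‖F z‖ < s⁻¹)) ∧
    ((∀ z ∈ ann (1/R) R, ‖z‖ < t⁻¹ → s < ‖F z‖) ∨
     (∀ z ∈ ann (1/R) R, ‖z‖ < t⁻¹ → ‖F z‖ < s⁻¹)) := by
  have hR0 : (0:ℝ) < R := lt_trans one_pos hR
  have hs0 : (0:ℝ) < s := lt_trans one_pos hs1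
  have hRinv : 1/R < 1 := by rw [div_lt_one hR0]; exact hR
  have hRinv0 : (0:ℝ) < 1/R := by positivity
  set A := ann (1/R) R with hA
  set C := {z : ℂ | s⁻¹ ≤ ‖z‖ ∧ ‖z‖ ≤ s} with hC
  have hCA : C ⊆ A := by
    rintro z ⟨h1, h2⟩
    exact ⟨lt_of_lt_of_le (by rw [one_div]; exact inv_strictAnti₀ hs0 hsR) h1,
      lt_of_le_of_lt h2 hsR⟩
  have hCcomp : IsCompact C := cann_isCompact s
  have hCne : C.Nonempty := ⟨1, by simp [hC, inv_le_one_iff₀, hs1.le, hs0.le]⟩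
  set D := F '' C with hD
  have hDcomp : IsCompact D := hCcomp.image_of_continuousOn (hcont.mono hCA)
  have hDne : D.Nonempty := hCne.image F
  have hDA : D ⊆ A := by
    rintro w ⟨z, hz, rfl⟩
    exact hmaps (hCA hz)
  obtain ⟨w1, hw1, hmax⟩ := hDcomp.exists_isMaxOn hDne continuous_norm.continuousOn
  obtain ⟨w0, hw0, hmin⟩ := hDcomp.exists_isMinOn hDne continuous_norm.continuousOn
  have hm1 : ‖w1‖ < R := (hDA hw1).2
  have hm0 : 1/R < ‖w0‖ := (hDA hw0).1
  have hm0pos : 0 < ‖w0‖ := lt_trans hRinv0 hm0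
  set t := max s (max (‖w1‖) (‖w0‖)⁻¹) with ht
  have hts : s ≤ t := le_max_left _ _
  have ht0 : 0 < t := lt_of_lt_of_le hs0 hts
  have htR : t < R := by
    apply max_lt hsR (max_lt hm1 _)
    rw [inv_lt_comm₀ hm0pos hR0]
    rw [one_div] at hm0
    exact hm0
  have hdich : ∀ z ∈ A, (t < ‖z‖ ∨ ‖z‖ < t⁻¹) →
      (s < ‖F z‖ ∨ ‖F z‖ < s⁻¹) := by
    intro z hz hcoll
    have hFz : F z ∈ A := hmaps hz
    by_contra hcon
    push_neg at hcon
    have hFzC : F z ∈ C := ⟨hcon.2, hcon.1⟩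
    have hzD : z ∈ D := ⟨F z, hFzC, hinv z hz⟩
    rcases hcoll with h | h
    · exact absurd (le_trans (hmax hzD) (le_max_of_le_right (le_max_left _ _))) (not_le.mpr h)
    · have h1 : (‖w0‖)⁻¹ ≤ t := le_max_of_le_right (le_max_right _ _)
      have h2 : t⁻¹ ≤ ‖w0‖ := by
        rw [inv_le_comm₀ ht0 hm0pos]
        exact h1
      exact absurd (le_trans h2 (hmin hzD)) (not_le.mpr h)
  -- outer connectivity
  have houter : (∀ z ∈ A, t < ‖z‖ → s < ‖F z‖) ∨
      (∀ z ∈ A, t < ‖z‖ → ‖F z‖ < s⁻¹) := by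
    set O := ann t R with hO
    have hOA : O ⊆ A := fun z hz =>
      ⟨lt_trans (lt_of_lt_of_le hRinv (le_trans hs1.le hts)) hz.1, hz.2⟩
    set u := O ∩ F ⁻¹' {w : ℂ | s < ‖w‖} with hu
    set v := O ∩ F ⁻¹' {w : ℂ | ‖w‖ < s⁻¹} with hv
    have hu_open : IsOpen u := ContinuousOn.isOpen_inter_preimage (hcont.mono hOA)
      (ann_isOpen t R) (isOpen_Ioi.preimage continuous_norm)
    have hv_open : IsOpen v := ContinuousOn.isOpen_inter_preimage (hcont.mono hOA)
      (ann_isOpen t R) (isOpen_Iio.preimage continuous_norm)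
    have hcover : O ⊆ u ∪ v := by
      intro z hz
      rcases hdich z (hOA hz) (Or.inl hz.1) with h | h
      · exact Or.inl ⟨hz, h⟩
      · exact Or.inr ⟨hz, h⟩
    rcases (O ∩ u).eq_empty_or_nonempty with hemp | hne
    · right
      intro z hz htz
      have hzO : z ∈ O := ⟨htz, hz.2⟩
      rcases hcover hzO with h | h
      · have hm : z ∈ O ∩ u := ⟨hzO, h⟩
        rw [hemp] at hm; exact hm.elim
      · exact h.2
    · rcases (O ∩ v).eq_empty_or_nonempty with hemp | hne'
      · left
        intro z hz htz
        have hzO : z ∈ O := ⟨htz, hz.2⟩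
        rcases hcover hzO with h | h
        · exact h.2
        · have hm : z ∈ O ∩ v := ⟨hzO, h⟩
          rw [hemp] at hm; exact hm.elim
      · exfalso
        obtain ⟨z, -, ⟨-, hz1⟩, -, hz2⟩ :=
          ann_isPreconnected t R ht0.le u v hu_open hv_open hcover hne hne'
        have : s⁻¹ < s := lt_trans (inv_lt_one_of_one_lt₀ hs1) hs1
        exact absurd (lt_trans hz1 hz2) (not_lt.mpr this.le)
  -- inner connectivity
  have hinner : (∀ z ∈ A, ‖z‖ < t⁻¹ → s < ‖F z‖) ∨
      (∀ z ∈ A, ‖z‖ < t⁻¹ → ‖F z‖ < s⁻¹) := by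
    set O := ann (1/R) t⁻¹ with hO
    have hOA : O ⊆ A := fun z hz =>
      ⟨hz.1, lt_trans hz.2 (lt_trans (inv_lt_one_of_one_lt₀ (lt_of_lt_of_le hs1 hts)) hR)⟩
    set u := O ∩ F ⁻¹' {w : ℂ | s < ‖w‖} with hu
    set v := O ∩ F ⁻¹' {w : ℂ | ‖w‖ < s⁻¹} with hv
    have hu_open : IsOpen u := ContinuousOn.isOpen_inter_preimage (hcont.mono hOA)
      (ann_isOpen _ _) (isOpen_Ioi.preimage continuous_norm)
    have hv_open : IsOpen v := ContinuousOn.isOpen_inter_preimage (hcont.mono hOA)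
      (ann_isOpen _ _) (isOpen_Iio.preimage continuous_norm)
    have hcover : O ⊆ u ∪ v := by
      intro z hz
      rcases hdich z (hOA hz) (Or.inr hz.2) with h | h
      · exact Or.inl ⟨hz, h⟩
      · exact Or.inr ⟨hz, h⟩
    rcases (O ∩ u).eq_empty_or_nonempty with hemp | hne
    · right
      intro z hz htz
      have hzO : z ∈ O := ⟨hz.1, htz⟩
      rcases hcover hzO with h | h
      · have hm : z ∈ O ∩ u := ⟨hzO, h⟩
        rw [hemp] at hm; exact hm.elim
      · exact h.2
    · rcases (O ∩ v).eq_empty_or_nonempty with hemp | hne'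
      · left
        intro z hz htz
        have hzO : z ∈ O := ⟨hz.1, htz⟩
        rcases hcover hzO with h | h
        · exact h.2
        · have hm : z ∈ O ∩ v := ⟨hzO, h⟩
          rw [hemp] at hm; exact hm.elim
      · exfalso
        obtain ⟨z, -, ⟨-, hz1⟩, -, hz2⟩ :=
          ann_isPreconnected (1/R) t⁻¹ hRinv0.le u v hu_open hv_open hcover hne hne'
        have : s⁻¹ < s := lt_trans (inv_lt_one_of_one_lt₀ hs1) hs1
        exact absurd (lt_trans hz1 hz2) (not_lt.mpr this.le)
  exact ⟨t, hts, htR, houter, hinner⟩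

lemma abs_eq_one_of_boundary (R : ℝ) (hR : 1 < R) (ψ : ℂ → ℂ)
    (hdiff : DifferentiableOn ℂ ψ (ann (1/R) R))
    (hne : ∀ z ∈ ann (1/R) R, ψ z ≠ 0)
    {z₀ : ℂ} (hz₀ : z₀ ∈ ann (1/R) R)
    (hb : ∀ ε : ℝ, 0 < ε → ∃ r, max (‖z₀‖) (‖z₀‖)⁻¹ < r ∧ r < R ∧
      ∀ z : ℂ, (‖z‖ = r ∨ ‖z‖ = r⁻¹) →
        ‖ψ z‖ ≤ 1 + ε ∧ (1+ε)⁻¹ ≤ ‖ψ z‖) :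
    ‖ψ z₀‖ = 1 := by
  have hR0 : (0:ℝ) < R := lt_trans one_pos hR
  have hz₀0 : 0 < ‖z₀‖ := lt_of_le_of_lt (by positivity) hz₀.1
  have key : ∀ ε : ℝ, 0 < ε →
      ‖ψ z₀‖ ≤ 1 + ε ∧ (1+ε)⁻¹ ≤ ‖ψ z₀‖ := by
    intro ε hε
    obtain ⟨r, hr1, hr2, hcirc⟩ := hb ε hε
    have hr0 : 0 < r := lt_of_le_of_lt (le_max_left _ _) hr1 |>.trans_le' hz₀0.le
    set U := ann r⁻¹ r with hU
    set Cr := {z : ℂ | r⁻¹ ≤ ‖z‖ ∧ ‖z‖ ≤ r} with hCr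
    have hCrClosed : IsClosed Cr := by
      have : Cr = (norm ⁻¹' Ici r⁻¹) ∩ (norm ⁻¹' Iic r) := rfl
      rw [this]
      exact (isClosed_Ici.preimage continuous_norm).inter
        (isClosed_Iic.preimage continuous_norm)
    have hUCr : U ⊆ Cr := fun z hz => ⟨hz.1.le, hz.2.le⟩
    have hclU : closure U ⊆ Cr := closure_minimal hUCr hCrClosed
    have hCrA : Cr ⊆ ann (1/R) R := by
      rintro z ⟨h1, h2⟩
      refine ⟨lt_of_lt_of_le ?_ h1, lt_of_le_of_lt h2 hr2⟩
      rw [one_div]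
      exact inv_strictAnti₀ hr0 hr2
    have hbdd : Bornology.IsBounded U := by
      apply Metric.isBounded_closedBall (x := (0:ℂ)) (r := r) |>.subset
      intro z hz
      simpa [Complex.dist_eq] using hz.2.le
    have hfro : ∀ z ∈ frontier U, ‖z‖ = r ∨ ‖z‖ = r⁻¹ := by
      intro z hz
      have h1 : z ∈ Cr := hclU hz.1
      have h2 : z ∉ U := fun hU' => hz.2 ((ann_isOpen _ _).interior_eq ▸ hU')
      rcases eq_or_lt_of_le h1.1 with h | h
      · exact Or.inr h.symm
      rcases eq_or_lt_of_le h1.2 with h' | h'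
      · exact Or.inl h'
      exact absurd ⟨h, h'⟩ h2
    have hz₀U : z₀ ∈ U := by
      constructor
      · rw [inv_lt_comm₀ hr0 hz₀0] at *
        exact lt_of_le_of_lt (le_max_right _ _) hr1
      · exact lt_of_le_of_lt (le_max_left _ _) hr1
    constructor
    · have := Complex.norm_le_of_forall_mem_frontier_norm_le hbdd
        ((hdiff.mono (hclU.trans hCrA)).diffContOnCl)
        (fun z hz => by
          exact (hcirc z (hfro z hz)).1)
        (subset_closure hz₀U)
      exact this
    · have hψinv : DifferentiableOn ℂ (fun z => (ψ z)⁻¹) (closure U) := by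
        apply DifferentiableOn.inv (hdiff.mono (hclU.trans hCrA))
        intro z hz
        exact hne z (hCrA (hclU hz))
      have hεbnd : ∀ z ∈ frontier U, ‖(ψ z)⁻¹‖ ≤ 1 + ε := by
        intro z hz
        obtain ⟨hub, hlb⟩ := hcirc z (hfro z hz)
        have hψz0 : 0 < ‖ψ z‖ :=
          lt_of_lt_of_le (by positivity) hlb
        rw [norm_inv]
        rw [inv_le_comm₀ hψz0 (by positivity)]
        exact hlb
      have := Complex.norm_le_of_forall_mem_frontier_norm_le hbdd
        hψinv.diffContOnCl hεbnd (subset_closure hz₀U)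
      rw [norm_inv] at this
      have hψz₀0 : 0 < ‖ψ z₀‖ := norm_pos_iff.mpr (hne z₀ hz₀)
      rw [inv_le_comm₀ hψz₀0 (by positivity)] at this
      exact this
  have hub : ‖ψ z₀‖ ≤ 1 := by
    apply le_of_forall_pos_le_add
    intro ε hε
    exact (key ε hε).1
  have hlb : 1 ≤ ‖ψ z₀‖ := by
    apply le_of_forall_pos_le_add
    intro ε hε
    have h5 : 1 ≤ (1+ε) * ‖ψ z₀‖ := by
      calc (1:ℝ) = (1+ε) * (1+ε)⁻¹ := by field_simp
      _ ≤ (1+ε) * ‖ψ z₀‖ :=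
        mul_le_mul_of_nonneg_left (key ε hε).2 (by linarith)
    nlinarith [hub, hε]
  linarith

lemma const_of_abs_eq_one (R : ℝ) (hR : 1 < R) (ψ : ℂ → ℂ)
    (hdiff : DifferentiableOn ℂ ψ (ann (1/R) R))
    (habs : ∀ z ∈ ann (1/R) R, ‖ψ z‖ = 1) :
    ∀ z ∈ ann (1/R) R, ψ z = ψ 1 := by
  have h1A : (1:ℂ) ∈ ann (1/R) R := by
    have h1 : ‖(1:ℂ)‖ = 1 := norm_one
    exact ⟨by rw [h1, div_lt_one (lt_trans one_pos hR)]; exact hR, by rw [h1]; exact hR⟩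
  have hmax : IsMaxOn (norm ∘ ψ) (ann (1/R) R) 1 := by
    intro z hz
    simp only [mem_setOf_eq, Function.comp_apply, habs z hz, habs 1 h1A]
    exact le_refl _
  exact fun z hz => Complex.eqOn_of_isPreconnected_of_isMaxOn_norm
    (ann_isPreconnected _ _ (by positivity)) (ann_isOpen _ _) hdiff h1A hmax hz

end AnnulusAux

set_option maxHeartbeats 2000000 in
/-- The only fixed-point-free antiholomorphic involution of the annulus
`A(R) = {z : 1/R < |z| < R}` is `z ↦ −1/conj z`. -/
theorem stmt_13 (R : ℝ) (hR : 1 < R) (F : ℂ → ℂ)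
    (hmaps : MapsTo F {z : ℂ | 1 / R < ‖z‖ ∧ ‖z‖ < R}
      {z : ℂ | 1 / R < ‖z‖ ∧ ‖z‖ < R})
    (hanti : DifferentiableOn ℂ (fun z => F (conj z))
      {z : ℂ | 1 / R < ‖z‖ ∧ ‖z‖ < R})
    (hinv : ∀ z ∈ {z : ℂ | 1 / R < ‖z‖ ∧ ‖z‖ < R}, F (F z) = z)
    (hfree : ∀ z ∈ {z : ℂ | 1 / R < ‖z‖ ∧ ‖z‖ < R}, F z ≠ z) :
    ∀ z ∈ {z : ℂ | 1 / R < ‖z‖ ∧ ‖z‖ < R}, F z = -1 / conj z := by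
  have hR0 : (0:ℝ) < R := by linarith
  have hRinv1 : 1/R < 1 := by rw [div_lt_one hR0]; exact hR
  have hRinv0 : (0:ℝ) < 1/R := by positivity
  have hmapsA : MapsTo F (ann (1/R) R) (ann (1/R) R) := hmaps
  have hantiA : DifferentiableOn ℂ (fun z => F (conj z)) (ann (1/R) R) := hanti
  have hinvA : ∀ z ∈ ann (1/R) R, F (F z) = z := hinv
  have hfreeA : ∀ z ∈ ann (1/R) R, F z ≠ z := hfree
  have hconjA : ∀ z : ℂ, z ∈ ann (1/R) R → conj z ∈ ann (1/R) R := by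
    intro z hz
    exact ⟨by rw [Complex.norm_conj]; exact hz.1, by rw [Complex.norm_conj]; exact hz.2⟩
  have h1A : (1:ℂ) ∈ ann (1/R) R := by
    have h1 : ‖(1:ℂ)‖ = 1 := norm_one
    exact ⟨by rw [h1]; exact hRinv1, by rw [h1]; exact hR⟩
  have hFcont : ContinuousOn F (ann (1/R) R) := by
    have h1 : ContinuousOn ((fun z => F (conj z)) ∘ (fun z : ℂ => conj z)) (ann (1/R) R) :=
      ContinuousOn.comp hantiA.continuousOn Complex.continuous_conj.continuousOn
        (fun z hz => hconjA z hz)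
    exact h1.congr (fun z _ => by simp only [Function.comp_apply, Complex.conj_conj])
  have hpoint : ∀ x : ℝ, 1/R < x → x < R →
      ((x:ℂ) ∈ ann (1/R) R ∧ ‖(x:ℂ)‖ = x) := by
    intro x h1 h2
    have hx : ‖(x:ℂ)‖ = x := by
      rw [Complex.norm_real, Real.norm_eq_abs, abs_of_pos (lt_trans hRinv0 h1)]
    exact ⟨⟨by rw [hx]; exact h1, by rw [hx]; exact h2⟩, hx⟩
  -- consistency helpers
  have houtcons : ∀ s t s' t' : ℝ, 1 ≤ t → t < R → 1 ≤ t' → t' < R → 1 < s → 1 < s' →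
      (∀ z ∈ ann (1/R) R, t < ‖z‖ → s < ‖F z‖) →
      (∀ z ∈ ann (1/R) R, t' < ‖z‖ → ‖F z‖ < s'⁻¹) → False := by
    intro s t s' t' ht1 htR ht1' htR' hs1 hs1' hup hdown
    have hmax : max t t' < R := max_lt htR htR'
    set x := (max t t' + R)/2 with hxdef
    have hx1 : max t t' < x := by simp only [hxdef]; linarith
    have hxR : x < R := by simp only [hxdef]; linarith
    have hxRinv : 1/R < x :=
      lt_trans hRinv1 (lt_of_le_of_lt (le_trans ht1 (le_max_left t t')) hx1)
    obtain ⟨hmem, habsx⟩ := hpoint x hxRinv hxR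
    have h1 := hup _ hmem (by rw [habsx]; exact lt_of_le_of_lt (le_max_left t t') hx1)
    have h2 := hdown _ hmem (by rw [habsx]; exact lt_of_le_of_lt (le_max_right t t') hx1)
    have h3 : s'⁻¹ < 1 := inv_lt_one_of_one_lt₀ hs1'
    linarith
  have hinncons : ∀ s t s' t' : ℝ, 1 ≤ t → t < R → 1 ≤ t' → t' < R → 1 < s → 1 < s' →
      (∀ z ∈ ann (1/R) R, ‖z‖ < t⁻¹ → s < ‖F z‖) →
      (∀ z ∈ ann (1/R) R, ‖z‖ < t'⁻¹ → ‖F z‖ < s'⁻¹) → False := by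
    intro s t s' t' ht1 htR ht1' htR' hs1 hs1' hup hdown
    have hmt : 1/R < t⁻¹ := by rw [one_div]; exact inv_strictAnti₀ (by linarith) htR
    have hmt' : 1/R < t'⁻¹ := by rw [one_div]; exact inv_strictAnti₀ (by linarith) htR'
    have hm : 1/R < min t⁻¹ t'⁻¹ := lt_min hmt hmt'
    set x := (1/R + min t⁻¹ t'⁻¹)/2 with hxdef
    have hx1 : 1/R < x := by simp only [hxdef]; linarith
    have hx2 : x < min t⁻¹ t'⁻¹ := by simp only [hxdef]; linarith
    have hxR : x < R :=
      lt_of_lt_of_le (lt_of_lt_of_le hx2 ((min_le_left _ _).trans (inv_le_one_of_one_le₀ ht1)))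
        (by linarith)
    obtain ⟨hmem, habsx⟩ := hpoint x hx1 hxR
    have h1 := hup _ hmem (by rw [habsx]; exact lt_of_lt_of_le hx2 (min_le_left _ _))
    have h2 := hdown _ hmem (by rw [habsx]; exact lt_of_lt_of_le hx2 (min_le_right _ _))
    have h3 : s'⁻¹ < 1 := inv_lt_one_of_one_lt₀ hs1'
    linarith
  -- main dichotomy
  have hmain :
      (∀ s : ℝ, 1 < s → s < R → ∃ t, s ≤ t ∧ t < R ∧
        (∀ z ∈ ann (1/R) R, t < ‖z‖ → ‖F z‖ < s⁻¹) ∧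
        (∀ z ∈ ann (1/R) R, ‖z‖ < t⁻¹ → s < ‖F z‖)) ∨
      (∀ s : ℝ, 1 < s → s < R → ∃ t, s ≤ t ∧ t < R ∧
        (∀ z ∈ ann (1/R) R, t < ‖z‖ → s < ‖F z‖) ∧
        (∀ z ∈ ann (1/R) R, ‖z‖ < t⁻¹ → ‖F z‖ < s⁻¹)) := by
    have hs₀1 : 1 < (1+R)/2 := by linarith
    have hs₀R : (1+R)/2 < R := by linarith
    obtain ⟨t₀, ht₀s, ht₀R, hO₀, hI₀⟩ := collar R hR F hmapsA hFcont hinvA hs₀1 hs₀R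
    have ht₀1 : 1 ≤ t₀ := le_trans hs₀1.le ht₀s
    rcases hO₀ with hOut | hOin
    · right
      intro s hs1 hsR
      obtain ⟨t, hts, htR, hO, hI⟩ := collar R hR F hmapsA hFcont hinvA hs1 hsR
      have ht1 : 1 ≤ t := le_trans hs1.le hts
      refine ⟨t, hts, htR, ?_, ?_⟩
      · rcases hO with h | h
        · exact h
        · exact (houtcons _ _ _ _ ht₀1 ht₀R ht1 htR hs₀1 hs1 hOut h).elim
      · rcases hI with h | h
        · exfalso
          have hs₁1 : 1 < (t₀+R)/2 := by linarith
          have hs₁R : (t₀+R)/2 < R := by linarith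
          obtain ⟨t₁, ht₁s, ht₁R, hO₁, hI₁⟩ := collar R hR F hmapsA hFcont hinvA hs₁1 hs₁R
          have ht₁1 : 1 ≤ t₁ := le_trans hs₁1.le ht₁s
          rcases hI₁ with h₁ | h₁
          · have hinv₁ : 1/R < t₁⁻¹ := by
              rw [one_div]; exact inv_strictAnti₀ (by linarith) ht₁R
            set x := (1/R + t₁⁻¹)/2 with hxdef
            have hx1 : 1/R < x := by simp only [hxdef]; linarith
            have hx2 : x < t₁⁻¹ := by simp only [hxdef]; linarith
            have hxle1 : x < 1 := lt_of_lt_of_le hx2 (inv_le_one_of_one_le₀ ht₁1)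
            have hxR : x < R := lt_trans hxle1 hR
            obtain ⟨hmem, habsx⟩ := hpoint x hx1 hxR
            have hFx := h₁ _ hmem (by rw [habsx]; exact hx2)
            have hFxA := hmapsA hmem
            have hFFx := hOut _ hFxA (by linarith)
            rw [hinvA _ hmem, habsx] at hFFx
            linarith
          · exact hinncons _ _ _ _ ht1 htR ht₁1 ht₁R hs1 hs₁1 h h₁
        · exact h
    · left
      intro s hs1 hsR
      obtain ⟨t, hts, htR, hO, hI⟩ := collar R hR F hmapsA hFcont hinvA hs1 hsR
      have ht1 : 1 ≤ t := le_trans hs1.le hts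
      refine ⟨t, hts, htR, ?_, ?_⟩
      · rcases hO with h | h
        · exact (houtcons _ _ _ _ ht1 htR ht₀1 ht₀R hs1 hs₀1 h hOin).elim
        · exact h
      · rcases hI with h | h
        · exact h
        · exfalso
          have hs₂1 : 1 < (t+R)/2 := by linarith
          have hs₂R : (t+R)/2 < R := by linarith
          obtain ⟨t₂, ht₂s, ht₂R, hO₂, hI₂⟩ := collar R hR F hmapsA hFcont hinvA hs₂1 hs₂R
          have ht₂1 : 1 ≤ t₂ := le_trans hs₂1.le ht₂s
          rcases hO₂ with h₂ | h₂
          · exact (houtcons _ _ _ _ ht₂1 ht₂R ht₀1 ht₀R hs₂1 hs₀1 h₂ hOin).elim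
          · set x := (t₂ + R)/2 with hxdef
            have hx1 : t₂ < x := by simp only [hxdef]; linarith
            have hxR : x < R := by simp only [hxdef]; linarith
            obtain ⟨hmem, habsx⟩ :=
              hpoint x (lt_trans hRinv1 (lt_of_le_of_lt ht₂1 hx1)) hxR
            have hFx := h₂ _ hmem (by rw [habsx]; exact hx1)
            have hs₂t : ((t+R)/2)⁻¹ < t⁻¹ := inv_strictAnti₀ (by linarith) (by linarith)
            have hFxA := hmapsA hmem
            have hFFx := h _ hFxA (by linarith)
            rw [hinvA _ hmem, habsx] at hFFx
            have h3 : s⁻¹ < 1 := inv_lt_one_of_one_lt₀ hs1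
            linarith
  rcases hmain with hSWAP | hPRES
  · -- swap case: F z = c / conj z with c = -1
    set ψ := fun z : ℂ => z * F (conj z) with hψdef
    have hψdiff : DifferentiableOn ℂ ψ (ann (1/R) R) := differentiableOn_id.mul hantiA
    have hψne : ∀ z ∈ ann (1/R) R, ψ z ≠ 0 := by
      intro z hz
      have h1 : z ≠ 0 := by
        intro h; have := hz.1; rw [h, norm_zero] at this; linarith
      have h2 : F (conj z) ≠ 0 := by
        intro h; have := (hmapsA (hconjA z hz)).1; rw [h, norm_zero] at this; linarith
      exact mul_ne_zero h1 h2
    have habs : ∀ z₀ ∈ ann (1/R) R, ‖ψ z₀‖ = 1 := by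
      intro z₀ hz₀
      apply abs_eq_one_of_boundary R hR ψ hψdiff hψne hz₀
      intro ε hε
      have hε1 : (0:ℝ) < 1 + ε := by linarith
      set s := max ((1+R)/2) (R/(1+ε)) with hsdef
      have hs1 : 1 < s := lt_of_lt_of_le (by linarith) (le_max_left _ _)
      have hsR : s < R := by
        apply max_lt (by linarith)
        rw [div_lt_iff₀ hε1]; nlinarith
      have hsRε : R ≤ (1+ε) * s := by
        have h := le_max_right ((1+R)/2) (R/(1+ε))
        rw [div_le_iff₀ hε1] at h
        linarith
      obtain ⟨t, hts, htR, hout, hinn⟩ := hSWAP s hs1 hsR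
      have ht0 : (0:ℝ) < t := by linarith
      have hz₀0 : 0 < ‖z₀‖ := lt_trans hRinv0 hz₀.1
      have hone_le : 1 ≤ max (‖z₀‖) (‖z₀‖)⁻¹ := by
        rcases le_total 1 (‖z₀‖) with h | h
        · exact le_max_of_le_left h
        · exact le_max_of_le_right (one_le_inv_iff₀.mpr ⟨hz₀0, h⟩)
      set M := max t (max (R/(1+ε)) (max (‖z₀‖) (‖z₀‖)⁻¹)) with hMdef
      have hMR : M < R := by
        apply max_lt htR
        apply max_lt
        · rw [div_lt_iff₀ hε1]; nlinarith
        · apply max_lt hz₀.2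
          have h := hz₀.1
          rw [one_div] at h
          exact (inv_lt_comm₀ hz₀0 hR0).mpr h
      set r := (M + R)/2 with hrdef
      have hMr : M < r := by simp only [hrdef]; linarith
      have hrR : r < R := by simp only [hrdef]; linarith
      have h1M : 1 ≤ M := hone_le.trans ((le_max_right _ _).trans (le_max_right t _))
      have hr1 : 1 < r := lt_of_le_of_lt h1M hMr
      have hrpos : (0:ℝ) < r := by linarith
      have hRer : R/(1+ε) ≤ r := ((le_max_left _ _).trans (le_max_right t _)).trans hMr.le
      have htr : t < r := lt_of_le_of_lt (le_max_left _ _) hMr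
      refine ⟨r, lt_of_le_of_lt ((le_max_right _ _).trans (le_max_right t _)) hMr, hrR, ?_⟩
      intro z hzc
      rcases hzc with hzr | hzr
      · have hzA : z ∈ ann (1/R) R :=
          ⟨by rw [hzr]; exact lt_trans hRinv1 hr1, by rw [hzr]; exact hrR⟩
        have hcz : conj z ∈ ann (1/R) R := hconjA z hzA
        have hcabs : ‖conj z‖ = r := by rw [Complex.norm_conj, hzr]
        have hFz : ‖F (conj z)‖ < s⁻¹ := hout _ hcz (by rw [hcabs]; exact htr)
        have hFzA := hmapsA hcz
        have ha0 : (0:ℝ) < ‖F (conj z)‖ := lt_trans hRinv0 hFzA.1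
        have hψabs : ‖ψ z‖ = r * ‖F (conj z)‖ := by
          simp only [hψdef]; rw [norm_mul, hzr]
        rw [hψabs]
        constructor
        · have hsa : s * ‖F (conj z)‖ ≤ 1 := by
            calc s * ‖F (conj z)‖ ≤ s * s⁻¹ :=
                  mul_le_mul_of_nonneg_left hFz.le (by linarith)
              _ = 1 := mul_inv_cancel₀ (by linarith)
          have h2 : r * ‖F (conj z)‖ ≤ R * ‖F (conj z)‖ :=
            mul_le_mul_of_nonneg_right hrR.le ha0.le
          have h3 : R * ‖F (conj z)‖ ≤ ((1+ε) * s) * ‖F (conj z)‖ :=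
            mul_le_mul_of_nonneg_right hsRε ha0.le
          have h4 : (1+ε) * (s * ‖F (conj z)‖) ≤ (1+ε) * 1 :=
            mul_le_mul_of_nonneg_left hsa hε1.le
          linarith
        · have h1 : (1+ε)⁻¹ = (R/(1+ε)) * (1/R) := by field_simp
          rw [h1]
          exact mul_le_mul hRer hFzA.1.le hRinv0.le hrpos.le
      · have hrinv1 : r⁻¹ < 1 := inv_lt_one_of_one_lt₀ hr1
        have hrinvR : 1/R < r⁻¹ := by rw [one_div]; exact inv_strictAnti₀ hrpos hrR
        have hzA : z ∈ ann (1/R) R :=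
          ⟨by rw [hzr]; exact hrinvR, by rw [hzr]; exact lt_trans hrinv1 hR⟩
        have hcz := hconjA z hzA
        have hcabs : ‖conj z‖ = r⁻¹ := by rw [Complex.norm_conj, hzr]
        have htinv : r⁻¹ < t⁻¹ := inv_strictAnti₀ ht0 htr
        have hFz : s < ‖F (conj z)‖ := hinn _ hcz (by rw [hcabs]; exact htinv)
        have hFzA := hmapsA hcz
        have hψabs : ‖ψ z‖ = r⁻¹ * ‖F (conj z)‖ := by
          simp only [hψdef]; rw [norm_mul, hzr]
        rw [hψabs]
        constructor
        · have h2 : r⁻¹ ≤ (1+ε)/R := by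
            rw [inv_le_comm₀ hrpos (by positivity), inv_div]
            exact hRer
          calc r⁻¹ * ‖F (conj z)‖ ≤ ((1+ε)/R) * R :=
                mul_le_mul h2 hFzA.2.le (norm_nonneg _) (by positivity)
            _ = 1 + ε := by field_simp
        · have h2 : R⁻¹ ≤ r⁻¹ := inv_anti₀ hrpos hrR.le
          have h3 : (1+ε)⁻¹ = R⁻¹ * (R/(1+ε)) := by field_simp
          rw [h3]
          exact mul_le_mul h2 ((le_max_right _ _).trans hFz.le) (by positivity) (by positivity)
    have hconst := const_of_abs_eq_one R hR ψ hψdiff habs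
    have hψ1 : ψ 1 = F 1 := by simp only [hψdef]; rw [map_one, one_mul]
    have hcabs : ‖F 1‖ = 1 := by rw [← hψ1]; exact habs 1 h1A
    have hcA : F 1 ∈ ann (1/R) R := hmapsA h1A
    have hcne : F 1 ≠ 0 := by
      intro h; rw [h, norm_zero] at hcabs; norm_num at hcabs
    have hformula : ∀ w ∈ ann (1/R) R, F w = F 1 / conj w := by
      intro w hw
      have hcw := hconjA w hw
      have h1 := hconst (conj w) hcw
      rw [hψ1] at h1
      have h2 : ψ (conj w) = conj w * F w := by
        simp only [hψdef]; rw [Complex.conj_conj]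
      rw [h2] at h1
      have hwne : conj w ≠ 0 := by
        intro h
        have := hw.1
        rw [← Complex.norm_conj, h, norm_zero] at this
        linarith
      rw [eq_div_iff hwne, ← h1]; ring
    have hFc : F (F 1) = 1 := hinvA 1 h1A
    have hceq : F 1 / conj (F 1) = 1 := by rw [← hformula (F 1) hcA]; exact hFc
    have hccne : conj (F 1) ≠ 0 := by
      intro h
      apply hcne
      rw [← Complex.conj_conj (F 1), h, map_zero]
    have hcconj : F 1 = conj (F 1) := (div_eq_one_iff_eq hccne).mp hceq
    have hcre : F 1 = (((F 1).re : ℝ) : ℂ) := (Complex.conj_eq_iff_re.mp hcconj.symm).symm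
    have hre_abs : |(F 1).re| = 1 := by
      rw [hcre, Complex.norm_real, Real.norm_eq_abs] at hcabs
      exact hcabs
    rcases (abs_eq zero_le_one).mp hre_abs with h | h
    · exfalso
      apply hfreeA 1 h1A
      rw [hcre, h]; norm_num
    · intro z hz
      have hc1 : F 1 = -1 := by rw [hcre, h]; norm_num
      rw [hformula z hz, hc1]
  · -- preserve case: impossible
    exfalso
    set ψ := fun z : ℂ => F (conj z) * z⁻¹ with hψdef
    have hzero : ∀ z ∈ ann (1/R) R, z ≠ 0 := by
      intro z hz h
      have := hz.1
      rw [h, norm_zero] at this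
      linarith
    have hψdiff : DifferentiableOn ℂ ψ (ann (1/R) R) :=
      hantiA.mul (differentiableOn_id.inv hzero)
    have hψne : ∀ z ∈ ann (1/R) R, ψ z ≠ 0 := by
      intro z hz
      have h2 : F (conj z) ≠ 0 := by
        intro h; have := (hmapsA (hconjA z hz)).1; rw [h, norm_zero] at this; linarith
      exact mul_ne_zero h2 (inv_ne_zero (hzero z hz))
    have habs : ∀ z₀ ∈ ann (1/R) R, ‖ψ z₀‖ = 1 := by
      intro z₀ hz₀
      apply abs_eq_one_of_boundary R hR ψ hψdiff hψne hz₀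
      intro ε hε
      have hε1 : (0:ℝ) < 1 + ε := by linarith
      set s := max ((1+R)/2) (R/(1+ε)) with hsdef
      have hs1 : 1 < s := lt_of_lt_of_le (by linarith) (le_max_left _ _)
      have hsR : s < R := by
        apply max_lt (by linarith)
        rw [div_lt_iff₀ hε1]; nlinarith
      have hsRε : R ≤ (1+ε) * s := by
        have h := le_max_right ((1+R)/2) (R/(1+ε))
        rw [div_le_iff₀ hε1] at h
        linarith
      obtain ⟨t, hts, htR, hout, hinn⟩ := hPRES s hs1 hsR
      have ht0 : (0:ℝ) < t := by linarith
      have hz₀0 : 0 < ‖z₀‖ := lt_trans hRinv0 hz₀.1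
      have hone_le : 1 ≤ max (‖z₀‖) (‖z₀‖)⁻¹ := by
        rcases le_total 1 (‖z₀‖) with h | h
        · exact le_max_of_le_left h
        · exact le_max_of_le_right (one_le_inv_iff₀.mpr ⟨hz₀0, h⟩)
      set M := max t (max (R/(1+ε)) (max (‖z₀‖) (‖z₀‖)⁻¹)) with hMdef
      have hMR : M < R := by
        apply max_lt htR
        apply max_lt
        · rw [div_lt_iff₀ hε1]; nlinarith
        · apply max_lt hz₀.2
          have h := hz₀.1
          rw [one_div] at h
          exact (inv_lt_comm₀ hz₀0 hR0).mpr h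
      set r := (M + R)/2 with hrdef
      have hMr : M < r := by simp only [hrdef]; linarith
      have hrR : r < R := by simp only [hrdef]; linarith
      have h1M : 1 ≤ M := hone_le.trans ((le_max_right _ _).trans (le_max_right t _))
      have hr1 : 1 < r := lt_of_le_of_lt h1M hMr
      have hrpos : (0:ℝ) < r := by linarith
      have hRer : R/(1+ε) ≤ r := ((le_max_left _ _).trans (le_max_right t _)).trans hMr.le
      have htr : t < r := lt_of_le_of_lt (le_max_left _ _) hMr
      refine ⟨r, lt_of_le_of_lt ((le_max_right _ _).trans (le_max_right t _)) hMr, hrR, ?_⟩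
      intro z hzc
      rcases hzc with hzr | hzr
      · have hzA : z ∈ ann (1/R) R :=
          ⟨by rw [hzr]; exact lt_trans hRinv1 hr1, by rw [hzr]; exact hrR⟩
        have hcz : conj z ∈ ann (1/R) R := hconjA z hzA
        have hcabs : ‖conj z‖ = r := by rw [Complex.norm_conj, hzr]
        have hFz : s < ‖F (conj z)‖ := hout _ hcz (by rw [hcabs]; exact htr)
        have hFzA := hmapsA hcz
        have hψabs : ‖ψ z‖ = ‖F (conj z)‖ * r⁻¹ := by
          simp only [hψdef]; rw [norm_mul, norm_inv, hzr]
        rw [hψabs]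
        constructor
        · have h2 : r⁻¹ ≤ (1+ε)/R := by
            rw [inv_le_comm₀ hrpos (by positivity), inv_div]
            exact hRer
          calc ‖F (conj z)‖ * r⁻¹ ≤ R * ((1+ε)/R) :=
                mul_le_mul hFzA.2.le h2 (by positivity) hR0.le
            _ = 1 + ε := by field_simp
        · have h2 : R⁻¹ ≤ r⁻¹ := inv_anti₀ hrpos hrR.le
          have h3 : (1+ε)⁻¹ = (R/(1+ε)) * R⁻¹ := by field_simp
          rw [h3]
          exact mul_le_mul ((le_max_right _ _).trans hFz.le) h2 (by positivity)
            (norm_nonneg _)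
      · have hrinv1 : r⁻¹ < 1 := inv_lt_one_of_one_lt₀ hr1
        have hrinvR : 1/R < r⁻¹ := by rw [one_div]; exact inv_strictAnti₀ hrpos hrR
        have hzA : z ∈ ann (1/R) R :=
          ⟨by rw [hzr]; exact hrinvR, by rw [hzr]; exact lt_trans hrinv1 hR⟩
        have hcz := hconjA z hzA
        have hcabs : ‖conj z‖ = r⁻¹ := by rw [Complex.norm_conj, hzr]
        have htinv : r⁻¹ < t⁻¹ := inv_strictAnti₀ ht0 htr
        have hFz : ‖F (conj z)‖ < s⁻¹ := hinn _ hcz (by rw [hcabs]; exact htinv)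
        have hFzA := hmapsA hcz
        have ha0 : (0:ℝ) < ‖F (conj z)‖ := lt_trans hRinv0 hFzA.1
        have hψabs : ‖ψ z‖ = ‖F (conj z)‖ * r := by
          simp only [hψdef]; rw [norm_mul, norm_inv, hzr, inv_inv]
        rw [hψabs]
        constructor
        · have hsa : s * ‖F (conj z)‖ ≤ 1 := by
            calc s * ‖F (conj z)‖ ≤ s * s⁻¹ :=
                  mul_le_mul_of_nonneg_left hFz.le (by linarith)
              _ = 1 := mul_inv_cancel₀ (by linarith)
          have h2 : ‖F (conj z)‖ * r ≤ ‖F (conj z)‖ * R :=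
            mul_le_mul_of_nonneg_left hrR.le ha0.le
          have h3 : ‖F (conj z)‖ * R ≤ ‖F (conj z)‖ * ((1+ε) * s) :=
            mul_le_mul_of_nonneg_left hsRε ha0.le
          have h4 : (1+ε) * (s * ‖F (conj z)‖) ≤ (1+ε) * 1 :=
            mul_le_mul_of_nonneg_left hsa hε1.le
          linarith
        · have h3 : (1+ε)⁻¹ = (1/R) * (R/(1+ε)) := by field_simp
          rw [h3]
          exact mul_le_mul hFzA.1.le hRer (by positivity) (norm_nonneg _)
    have hconst := const_of_abs_eq_one R hR ψ hψdiff habs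
    have hψ1 : ψ 1 = F 1 := by simp only [hψdef]; rw [map_one, inv_one, mul_one]
    have hlamabs : ‖F 1‖ = 1 := by rw [← hψ1]; exact habs 1 h1A
    have hformula : ∀ w ∈ ann (1/R) R, F w = F 1 * conj w := by
      intro w hw
      have hcw := hconjA w hw
      have h1 := hconst (conj w) hcw
      rw [hψ1] at h1
      have h2 : ψ (conj w) = F w * (conj w)⁻¹ := by
        simp only [hψdef]; rw [Complex.conj_conj]
      rw [h2] at h1
      have hwne : conj w ≠ 0 := by
        intro h
        have := hw.1
        rw [← Complex.norm_conj, h, norm_zero] at this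
        linarith
      field_simp at h1
      rw [mul_comm]; exact h1
    set w := Complex.exp ((((F 1).arg / 2 : ℝ) : ℂ) * Complex.I) with hwdef
    have habsw : ‖w‖ = 1 := Complex.norm_exp_ofReal_mul_I _
    have hwA : w ∈ ann (1/R) R := ⟨by rw [habsw]; exact hRinv1, by rw [habsw]; exact hR⟩
    have hw2 : w * w = F 1 := by
      rw [hwdef, ← Complex.exp_add]
      have h3 : (((F 1).arg / 2 : ℝ) : ℂ) * Complex.I + (((F 1).arg / 2 : ℝ) : ℂ) * Complex.I
          = ((F 1).arg : ℂ) * Complex.I := by push_cast; ring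
      rw [h3]
      have h4 := Complex.norm_mul_exp_arg_mul_I (F 1)
      rwa [hlamabs, Complex.ofReal_one, one_mul] at h4
    have hwconj : w * conj w = 1 := by
      rw [Complex.mul_conj, Complex.normSq_eq_norm_sq, habsw]
      norm_num
    have hFw : F w = w := by
      rw [hformula w hwA, ← hw2, mul_assoc, hwconj, mul_one]
    exact hfreeA w hwA hFw
end

section
/- Let R > 1 and let φ be holomorphic on the annulus A(R) = {z ∈ ℂ : 1/R < |z| < R} satisfying φ(−1/conj(z)) = −conj(φ(z)) for all z ∈ A(R). For n ∈ ℤ, let a_n = (1/(2πi)) times the contour integral of φ(z)·z^(−n−1) over the positively oriented unit circle (the n-th Laurent coefficient of φ). Then a_0 is purely imaginary (Re(a_0) = 0), and a_{−n} = (−1)^{n+1}·conj(a_n) for every integer n ≥ 1. -/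
open ComplexConjugate

open Complex intervalIntegral in
private lemma my_conj_intervalIntegral (f : ℝ → ℂ) (a b : ℝ) :
    conj (∫ x in a..b, f x) = ∫ x in a..b, conj (f x) := by
  simp only [intervalIntegral, map_sub, ← integral_conj]

/-- If `φ` is holomorphic on the annulus `A(R)` and satisfies `φ(−1/conj z) = −conj (φ z)`,
then its Laurent coefficients `aₙ = (1/(2πi)) ∮ φ(z) z^(−n−1) dz` satisfy `Re a₀ = 0` and
`a₋ₙ = (−1)^(n+1) conj aₙ` for all `n ≥ 1`. -/
theorem stmt_15 (R : ℝ) (hR : 1 < R) (φ : ℂ → ℂ)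
    (hhol : DifferentiableOn ℂ φ {z : ℂ | 1 / R < ‖z‖ ∧ ‖z‖ < R})
    (hsym : ∀ z ∈ {z : ℂ | 1 / R < ‖z‖ ∧ ‖z‖ < R},
      φ (-1 / conj z) = -conj (φ z))
    (a : ℤ → ℂ)
    (ha : ∀ n : ℤ, a n = (2 * Real.pi * Complex.I)⁻¹ * ∮ z in C(0, 1), φ z * z ^ (-n - 1)) :
    (a 0).re = 0 ∧ ∀ n : ℕ, 1 ≤ n → a (-(n : ℤ)) = (-1) ^ (n + 1) * conj (a (n : ℤ)) := by
  set c : ℝ → ℂ := circleMap 0 1 with hc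
  have hcne : ∀ θ : ℝ, c θ ≠ 0 := fun θ => circleMap_ne_center one_ne_zero
  have h1 : ∀ n : ℤ, a n = (2 * (Real.pi : ℂ))⁻¹ *
      ∫ θ in (0:ℝ)..2 * Real.pi, φ (c θ) * c θ ^ (-n) := by
    intro n
    rw [ha, circleIntegral]
    have hptw : ∀ θ : ℝ, deriv (circleMap 0 1) θ • (φ (circleMap 0 1 θ) *
        circleMap 0 1 θ ^ (-n - 1)) = Complex.I * (φ (c θ) * c θ ^ (-n)) := by
      intro θ
      rw [deriv_circleMap, smul_eq_mul]
      have : c θ ^ (-n) = c θ ^ (-n - 1) * c θ := by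
        rw [← zpow_add_one₀ (hcne θ)]; ring_nf
      rw [this]; ring
    simp only [hptw]
    rw [intervalIntegral.integral_const_mul]
    have h2 : (2 * (Real.pi : ℂ) * Complex.I)⁻¹ * Complex.I = (2 * (Real.pi : ℂ))⁻¹ := by
      rw [mul_inv, mul_assoc, inv_mul_cancel₀ Complex.I_ne_zero, mul_one]
    rw [← mul_assoc, h2]
  have hmone : ∀ n : ℤ, ((-1 : ℂ) ^ n)⁻¹ = (-1) ^ n := by
    intro n
    refine inv_eq_of_mul_eq_one_right ?_
    rw [← zpow_add₀ (by norm_num : (-1:ℂ) ≠ 0), show n + n = 2 * n by ring, zpow_mul]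
    norm_num
  have hmap : ∀ θ : ℝ, -1 / conj (c θ) = c (θ + Real.pi) := by
    intro θ
    simp only [hc, circleMap, Complex.ofReal_one, one_mul, zero_add, Complex.ofReal_add]
    rw [← Complex.exp_conj]
    simp only [map_mul, Complex.conj_ofReal, Complex.conj_I, mul_neg, Complex.exp_neg]
    rw [add_mul, Complex.exp_add, Complex.exp_pi_mul_I]
    field_simp
  have hconjc : ∀ θ : ℝ, conj (c θ) = -(c (θ + Real.pi))⁻¹ := by
    intro θ
    have h := hmap θ
    have hne : conj (c θ) ≠ 0 := by
      simp only [ne_eq, map_eq_zero]; exact hcne θ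
    rw [← h, neg_div, inv_neg, neg_neg, one_div, inv_inv]
  have key : ∀ n : ℤ, conj (a n) = -(-1 : ℂ) ^ n * a (-n) := by
    intro n
    rw [h1 n, h1 (-n), neg_neg, map_mul, my_conj_intervalIntegral]
    have hptw : ∀ θ : ℝ, conj (φ (c θ) * c θ ^ (-n)) =
        -(-1 : ℂ) ^ n * (φ (c (θ + Real.pi)) * c (θ + Real.pi) ^ n) := by
      intro θ
      have hmem : c θ ∈ {z : ℂ | 1 / R < ‖z‖ ∧ ‖z‖ < R} := by
        have : ‖c θ‖ = 1 := by simp [hc, norm_circleMap_zero]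
        constructor <;> rw [this]
        · rw [div_lt_one (by linarith)]; exact hR
        · exact hR
      have hφ : conj (φ (c θ)) = -φ (c (θ + Real.pi)) := by
        have := hsym (c θ) hmem
        rw [hmap θ] at this
        rw [this]; ring
      have hx : (-(c (θ + Real.pi))⁻¹) ^ (-n) = (-1 : ℂ) ^ n * c (θ + Real.pi) ^ n := by
        rw [show -(c (θ + Real.pi))⁻¹ = (-1) * (c (θ + Real.pi))⁻¹ by ring, mul_zpow]
        simp [zpow_neg, inv_zpow, inv_inv, hmone]
      rw [map_mul, map_zpow₀, hφ, hconjc θ, hx]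
      ring
    simp only [hptw]
    rw [intervalIntegral.integral_const_mul]
    have hper : Function.Periodic (fun θ => φ (c θ) * c θ ^ n) (2 * Real.pi) := by
      intro θ
      simp only [hc, periodic_circleMap 0 1 θ]
    have hshift : (∫ θ in (0:ℝ)..2 * Real.pi,
        φ (c (θ + Real.pi)) * c (θ + Real.pi) ^ n) =
        ∫ θ in (0:ℝ)..2 * Real.pi, φ (c θ) * c θ ^ n := by
      rw [intervalIntegral.integral_comp_add_right (fun θ => φ (c θ) * c θ ^ n) Real.pi]
      have := hper.intervalIntegral_add_eq Real.pi 0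
      rw [zero_add] at this
      rw [zero_add, show (2 * Real.pi + Real.pi) = Real.pi + 2 * Real.pi by ring, this]
    rw [hshift]
    have hconj2pi : conj ((2 * (Real.pi : ℂ))⁻¹) = (2 * (Real.pi : ℂ))⁻¹ := by
      simp [map_inv₀, map_mul, Complex.conj_ofReal, map_ofNat]
    rw [hconj2pi]; ring
  constructor
  · have h0 := key 0
    simp only [zpow_zero, neg_mul, one_mul, neg_zero] at h0
    have := Complex.add_conj (a 0)
    rw [h0, add_neg_cancel] at this
    have h2 : ((a 0).re : ℂ) = 0 := by
      have htwo : (2 : ℂ) ≠ 0 := by norm_num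
      field_simp at this
      simpa using this
    exact_mod_cast h2
  · intro n hn
    have hk := key (n : ℤ)
    have : a (-(n : ℤ)) = (-(-1 : ℂ) ^ (n : ℤ))⁻¹ * conj (a (n : ℤ)) := by
      rw [hk]
      rw [← mul_assoc, inv_mul_cancel₀ (by
        simp only [ne_eq, neg_eq_zero]
        exact zpow_ne_zero _ (by norm_num)), one_mul]
    rw [this]
    congr 1
    rw [inv_neg, hmone, zpow_natCast, pow_succ]
    ring
end
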